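/- arXiv:1801.02675 — 4 statements merged into one kernel-verified Lean document; each statement's English description precedes it below -/
import Mathlib

section
/- Let K_1,…,K_{n−1} be convex bodies in ℝⁿ and let u ∈ S^{n−1}. Then the mixed area measure of the singleton {u} equals the (n−1)-dimensional mixed volume of the faces: S(K_1,…,K_{n−1},{u}) = V(K_1^u,…,K_{n−1}^u), where the faces K_i^u are translated into the hyperplane u^⊥ and the mixed volume on the right is the (n−1)-dimensional mixed volume computed in u^⊥. -/
open scoped Pointwise NNReal ENNReal
open MeasureTheory Metric Set Filter

noncomputable section

abbrev Euc (n : ℕ) : Type := EuclideanSpace ℝ (Fin n)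

/-- A convex body: a compact convex set with nonempty interior. -/
def IsConvexBody {n : ℕ} (K : Set (Euc n)) : Prop :=
  Convex ℝ K ∧ IsCompact K ∧ (interior K).Nonempty

/-- The mixed volume of `n` compact convex sets in `ℝⁿ`, via the polarization formula. -/
noncomputable def mixedVolume {n : ℕ} (K : Fin n → Set (Euc n)) : ℝ :=
  (n.factorial : ℝ)⁻¹ *
    ∑ S ∈ Finset.univ.powerset.filter (fun S : Finset (Fin n) => S.Nonempty),
      (-1 : ℝ) ^ (n - S.card) * (volume (∑ i ∈ S, K i)).toReal

/-- The support function of a set. -/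
noncomputable def suppFn {n : ℕ} (K : Set (Euc n)) (u : Euc n) : ℝ :=
  sSup ((fun x => (inner ℝ x u : ℝ)) '' K)

/-- The face of `K` with outer normal `u`. -/
def face {n : ℕ} (K : Set (Euc n)) (u : Euc n) : Set (Euc n) :=
  {x ∈ K | (inner ℝ x u : ℝ) = suppFn K u}

/-- The surface area measure of `K`, as a set function:
`S_K(Ω) = H^{n-1}(τ(K,Ω))` where `τ(K,Ω)` is the inverse spherical image. -/
noncomputable def surfMeas {n : ℕ} (K : Set (Euc n)) (Ω : Set (Euc n)) : ℝ≥0∞ :=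
  μH[(n : ℝ) - 1] {x | x ∈ frontier K ∧ ∃ u ∈ Ω, ‖u‖ = 1 ∧ (inner ℝ x u : ℝ) = suppFn K u}

/-- The mixed area measure `S(K_1,…,K_{n-1}, Ω)` via the polarization formula. -/
noncomputable def mixedAreaMeas {n : ℕ} (K : Fin (n - 1) → Set (Euc n)) (Ω : Set (Euc n)) : ℝ :=
  ((n - 1).factorial : ℝ)⁻¹ *
    ∑ S ∈ Finset.univ.powerset.filter (fun S : Finset (Fin (n - 1)) => S.Nonempty),
      (-1 : ℝ) ^ (n - 1 - S.card) * (surfMeas (∑ i ∈ S, K i) Ω).toReal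

/-- The `m`-dimensional mixed volume of `m` compact convex sets lying in (translates of) an
`m`-dimensional subspace of `ℝⁿ`, computed with the `m`-dimensional Hausdorff measure. -/
noncomputable def hausdorffMixedVolume {n : ℕ} (m : ℕ) (K : Fin m → Set (Euc n)) : ℝ :=
  (m.factorial : ℝ)⁻¹ *
    ∑ S ∈ Finset.univ.powerset.filter (fun S : Finset (Fin m) => S.Nonempty),
      (-1 : ℝ) ^ (m - S.card) * (μH[(m : ℝ)] (∑ i ∈ S, K i)).toReal

/-- The Wulff shape of a function `g` (only the values of `g` on the unit sphere matter). -/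
def wulff {n : ℕ} (g : Euc n → ℝ) : Set (Euc n) :=
  {x | ∀ u : Euc n, ‖u‖ = 1 → (inner ℝ x u : ℝ) ≤ g u}

/-- `A` is homothetic to `B` if `A = λ • B + v` for some `λ > 0`, `v ∈ ℝⁿ`. -/
def Homothetic {n : ℕ} (A B : Set (Euc n)) : Prop :=
  ∃ lam : ℝ, 0 < lam ∧ ∃ v : Euc n, A = (fun x => lam • x + v) '' B

/-- `K` is weakly decomposable if there is a nonempty compact convex set `M`, not homothetic
to `K`, with `S_{K+M}` absolutely continuous with respect to `S_K`. -/
def WeaklyDecomposable {n : ℕ} (K : Set (Euc n)) : Prop :=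
  ∃ M : Set (Euc n), Convex ℝ M ∧ IsCompact M ∧ M.Nonempty ∧ ¬ Homothetic M K ∧
    ∀ Ω : Set (Euc n), MeasurableSet Ω → surfMeas K Ω = 0 → surfMeas (K + M) Ω = 0

def IsSimplex {n : ℕ} (K : Set (Euc n)) : Prop :=
  ∃ p : Fin (n + 1) → Euc n, AffineIndependent ℝ p ∧ K = convexHull ℝ (Set.range p)

def IsPolytope {n : ℕ} (K : Set (Euc n)) : Prop :=
  ∃ S : Finset (Euc n), K = convexHull ℝ (S : Set (Euc n))

/-- The set of outer unit normals of facets ((n-1)-dimensional faces) of `K`. -/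
def facetNormals {n : ℕ} (K : Set (Euc n)) : Set (Euc n) :=
  {u | ‖u‖ = 1 ∧ Module.finrank ℝ (affineSpan ℝ (face K u)).direction = n - 1}

/-- A zonotope: a finite Minkowski sum of segments. -/
def IsZonotope {n : ℕ} (Z : Set (Euc n)) : Prop :=
  ∃ (m : ℕ) (v w : Fin m → Euc n), Z = ∑ i : Fin m, segment ℝ (v i) (w i)

/-- A zonoid: a compact convex set which is a Hausdorff-metric limit of zonotopes. -/
def IsZonoid {n : ℕ} (K : Set (Euc n)) : Prop :=
  IsCompact K ∧ Convex ℝ K ∧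
    ∃ Z : ℕ → Set (Euc n), (∀ m, IsZonotope (Z m)) ∧
      Tendsto (fun m => EMetric.hausdorffEdist (Z m) K) atTop (nhds 0)


section AuxMixed

variable {n : ℕ}

lemma contInner (u : Euc n) : Continuous fun x : Euc n => (inner ℝ x u : ℝ) :=
  continuous_id.inner continuous_const

lemma isGreatest_suppFn {K : Set (Euc n)} (hK : IsCompact K) (hne : K.Nonempty) (u : Euc n) :
    IsGreatest ((fun x => (inner ℝ x u : ℝ)) '' K) (suppFn K u) := by
  have himg : IsCompact ((fun x => (inner ℝ x u : ℝ)) '' K) := hK.image (contInner u)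
  exact ⟨himg.sSup_mem (hne.image _), fun x hx => le_csSup himg.bddAbove hx⟩

lemma suppFn_le {K : Set (Euc n)} (hK : IsCompact K) {x : Euc n} (hx : x ∈ K) (u : Euc n) :
    (inner ℝ x u : ℝ) ≤ suppFn K u :=
  (isGreatest_suppFn hK ⟨x, hx⟩ u).2 ⟨x, hx, rfl⟩

lemma suppFn_add {A B : Set (Euc n)} (hA : IsCompact A) (hAne : A.Nonempty)
    (hB : IsCompact B) (hBne : B.Nonempty) (u : Euc n) :
    suppFn (A + B) u = suppFn A u + suppFn B u := by
  obtain ⟨⟨a, ha, hae⟩, -⟩ := isGreatest_suppFn hA hAne u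
  obtain ⟨⟨b, hb, hbe⟩, -⟩ := isGreatest_suppFn hB hBne u
  have hg : IsGreatest ((fun x => (inner ℝ x u : ℝ)) '' (A + B)) (suppFn A u + suppFn B u) := by
    constructor
    · have hae' : (inner ℝ a u : ℝ) = suppFn A u := hae
      have hbe' : (inner ℝ b u : ℝ) = suppFn B u := hbe
      exact ⟨a + b, Set.add_mem_add ha hb, by
        show (inner ℝ (a + b) u : ℝ) = _
        rw [inner_add_left, hae', hbe']⟩
    · rintro t ⟨x, hx, rfl⟩
      obtain ⟨p, hp, q, hq, rfl⟩ := Set.mem_add.mp hx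
      show (inner ℝ (p + q) u : ℝ) ≤ _
      rw [inner_add_left]
      exact add_le_add (suppFn_le hA hp u) (suppFn_le hB hq u)
  exact hg.csSup_eq

lemma face_add {A B : Set (Euc n)} (hA : IsCompact A) (hAne : A.Nonempty)
    (hB : IsCompact B) (hBne : B.Nonempty) (u : Euc n) :
    face (A + B) u = face A u + face B u := by
  ext x
  constructor
  · rintro ⟨hx, he⟩
    obtain ⟨p, hp, q, hq, rfl⟩ := Set.mem_add.mp hx
    rw [inner_add_left, suppFn_add hA hAne hB hBne] at he
    have h1 := suppFn_le hA hp u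
    have h2 := suppFn_le hB hq u
    exact Set.add_mem_add ⟨hp, by linarith⟩ ⟨hq, by linarith⟩
  · rintro hx
    obtain ⟨p, ⟨hp, hpe⟩, q, ⟨hq, hqe⟩, rfl⟩ := Set.mem_add.mp hx
    exact ⟨Set.add_mem_add hp hq, by
      rw [inner_add_left, hpe, hqe, suppFn_add hA hAne hB hBne]⟩

lemma sum_isCompact {ι : Type*} (S : Finset ι) (K : ι → Set (Euc n))
    (hK : ∀ i, IsCompact (K i)) : IsCompact (∑ i ∈ S, K i) := by
  classical
  induction S using Finset.induction with
  | empty =>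
    rw [Finset.sum_empty, ← Set.singleton_zero]
    exact isCompact_singleton
  | insert _ _ h ih => rw [Finset.sum_insert h]; exact (hK _).add ih

lemma sum_nonempty {ι : Type*} (S : Finset ι) (K : ι → Set (Euc n))
    (hK : ∀ i, (K i).Nonempty) : (∑ i ∈ S, K i).Nonempty := by
  classical
  induction S using Finset.induction with
  | empty => exact ⟨0, by rw [Finset.sum_empty, ← Set.singleton_zero]; exact rfl⟩
  | insert _ _ h ih => rw [Finset.sum_insert h]; exact (hK _).add ih

lemma face_sum {ι : Type*} (K : ι → Set (Euc n)) (hK : ∀ i, IsCompact (K i))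
    (hne : ∀ i, (K i).Nonempty) (u : Euc n) (S : Finset ι) (hS : S.Nonempty) :
    face (∑ i ∈ S, K i) u = ∑ i ∈ S, face (K i) u := by
  classical
  induction S using Finset.cons_induction with
  | empty => exact absurd hS (by simp)
  | cons a s ha ih =>
    rcases s.eq_empty_or_nonempty with rfl | hs
    · simp
    · rw [Finset.sum_cons, Finset.sum_cons,
        face_add (hK a) (hne a) (sum_isCompact s K hK) (sum_nonempty s K hne), ih hs]

lemma face_subset_frontier {K : Set (Euc n)} (hK : IsCompact K) {u : Euc n} (hu : ‖u‖ = 1) :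
    face K u ⊆ frontier K := by
  rintro x ⟨hxK, hxe⟩
  rw [frontier, hK.isClosed.closure_eq]
  refine ⟨hxK, fun hint => ?_⟩
  obtain ⟨ε, hε, hball⟩ := Metric.isOpen_iff.mp isOpen_interior x hint
  have hmem : x + (ε/2) • u ∈ K := by
    apply interior_subset (hball ?_)
    rw [Metric.mem_ball, dist_eq_norm, add_sub_cancel_left, norm_smul, hu]
    simp only [mul_one, Real.norm_eq_abs, abs_of_pos (by linarith : (0:ℝ) < ε/2)]
    linarith
  have hle := suppFn_le hK hmem u
  have huu : (inner ℝ u u : ℝ) = 1 := by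
    rw [real_inner_self_eq_norm_mul_norm, hu]; norm_num
  rw [inner_add_left, real_inner_smul_left, hxe, huu] at hle
  linarith

lemma surfMeas_singleton_eq {L : Set (Euc n)} (hL : IsCompact L) {u : Euc n} (hu : ‖u‖ = 1) :
    surfMeas L {u} = μH[(n : ℝ) - 1] (face L u) := by
  unfold surfMeas
  congr 1
  ext x
  constructor
  · rintro ⟨hfr, v, hv, -, he⟩
    rw [Set.mem_singleton_iff] at hv
    subst hv
    refine ⟨?_, he⟩
    have := frontier_subset_closure (s := L) hfr
    rwa [hL.isClosed.closure_eq] at this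
  · intro hx
    exact ⟨face_subset_frontier hL hu hx, u, rfl, hu, hx.2⟩

end AuxMixed

/-- For convex bodies `K₁,…,K_{n-1}` and `u ∈ S^{n-1}`, the mixed area measure of
the singleton `{u}` equals the `(n-1)`-dimensional mixed volume of the faces `K₁ᵘ,…,K_{n-1}ᵘ`. -/
theorem mixedAreaMeas_singleton (n : ℕ) (hn : 1 ≤ n) (K : Fin (n - 1) → Set (Euc n))
    (hK : ∀ i, IsConvexBody (K i)) (u : Euc n) (hu : ‖u‖ = 1) :
    mixedAreaMeas K {u} = hausdorffMixedVolume (n - 1) (fun i => face (K i) u) := by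
  have hcast : ((n - 1 : ℕ) : ℝ) = (n : ℝ) - 1 := by
    push_cast [Nat.cast_sub hn]; ring
  unfold mixedAreaMeas hausdorffMixedVolume
  congr 1
  refine Finset.sum_congr rfl fun S hS => ?_
  have hSne : S.Nonempty := (Finset.mem_filter.mp hS).2
  have hcomp : ∀ i, IsCompact (K i) := fun i => (hK i).2.1
  have hne : ∀ i, (K i).Nonempty := fun i => (hK i).2.2.mono interior_subset
  congr 1
  rw [surfMeas_singleton_eq (sum_isCompact S K hcomp) hu,
    face_sum K hcomp hne u S hSne, hcast]


end
end

section
/- Let K be a convex body in ℝⁿ containing the origin in its interior, let f:S^{n−1}→ℝ be continuous, and let (a,b) be an interval containing 0 on which h_K(u)+t·f(u) > 0 for all u∈S^{n−1} and t∈(a,b). Then for every u ∈ S^{n−1}, the function t ↦ h_{K_t(f)}(u) is concave on (a,b), where K_t(f)=W(h_K+tf). -/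
open scoped Pointwise NNReal ENNReal
open MeasureTheory Metric Set Filter

noncomputable section

/-- For a convex body `K` with `0 ∈ int K` and a continuous `f`, the support
function `t ↦ h_{K_t(f)}(u)` of the perturbation `K_t(f) = W(h_K + t f)` is concave in `t`. -/
theorem suppFn_wulff_perturbation_concave (n : ℕ) (K : Set (Euc n)) (hK : IsConvexBody K)
    (h0 : (0 : Euc n) ∈ interior K) (f : Euc n → ℝ) (hf : Continuous f)
    (a b : ℝ) (ha : a < 0) (hb : 0 < b)
    (hpos : ∀ t ∈ Set.Ioo a b, ∀ u : Euc n, ‖u‖ = 1 → 0 < suppFn K u + t * f u)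
    (u : Euc n) (hu : ‖u‖ = 1) :
    ConcaveOn ℝ (Set.Ioo a b)
      (fun t => suppFn (wulff (fun v => suppFn K v + t * f v)) u) := by
  set g : ℝ → Euc n → ℝ := fun t v => suppFn K v + t * f v with hg
  have hmem : ∀ t ∈ Set.Ioo a b, (0 : Euc n) ∈ wulff (g t) := by
    intro t ht v hv
    simpa using (hpos t ht v hv).le
  have hbdd : ∀ t : ℝ, BddAbove ((fun x => (inner ℝ x u : ℝ)) '' wulff (g t)) := by
    intro t
    refine ⟨g t u, ?_⟩
    rintro y ⟨x, hx, rfl⟩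
    exact hx u hu
  have hne : ∀ t ∈ Set.Ioo a b, ((fun x => (inner ℝ x u : ℝ)) '' wulff (g t)).Nonempty :=
    fun t ht => ⟨_, ⟨0, hmem t ht, rfl⟩⟩
  refine ⟨convex_Ioo a b, ?_⟩
  intro t₁ ht₁ t₂ ht₂ p q hp hq hpq
  have htmem : p • t₁ + q • t₂ ∈ Set.Ioo a b := (convex_Ioo a b) ht₁ ht₂ hp hq hpq
  -- key inequality for elements
  have key : ∀ x₁ ∈ wulff (g t₁), ∀ x₂ ∈ wulff (g t₂),
      p * (inner ℝ x₁ u : ℝ) + q * (inner ℝ x₂ u : ℝ)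
        ≤ suppFn (wulff (g (p • t₁ + q • t₂))) u := by
    intro x₁ hx₁ x₂ hx₂
    have hxmem : p • x₁ + q • x₂ ∈ wulff (g (p • t₁ + q • t₂)) := by
      intro v hv
      have h1 := hx₁ v hv
      have h2 := hx₂ v hv
      have hin : (inner ℝ (p • x₁ + q • x₂) v : ℝ)
          = p * (inner ℝ x₁ v : ℝ) + q * (inner ℝ x₂ v : ℝ) := by
        simp [inner_add_left, real_inner_smul_left, Finset.mul_sum, mul_assoc]
      have haff : g (p • t₁ + q • t₂) v = p * g t₁ v + q * g t₂ v := by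
        have hq1 : q = 1 - p := by linarith
        simp only [hg, smul_eq_mul, hq1]
        ring
      rw [hin, haff]
      exact add_le_add (mul_le_mul_of_nonneg_left h1 hp) (mul_le_mul_of_nonneg_left h2 hq)
    have hle : (inner ℝ (p • x₁ + q • x₂) u : ℝ)
        ≤ suppFn (wulff (g (p • t₁ + q • t₂))) u :=
      le_csSup (hbdd _) ⟨_, hxmem, rfl⟩
    calc p * (inner ℝ x₁ u : ℝ) + q * (inner ℝ x₂ u : ℝ)
        = (inner ℝ (p • x₁ + q • x₂) u : ℝ) := by
          simp [inner_add_left, real_inner_smul_left, Finset.mul_sum, mul_assoc]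
      _ ≤ _ := hle
  show p • suppFn (wulff (g t₁)) u + q • suppFn (wulff (g t₂)) u
      ≤ suppFn (wulff (g (p • t₁ + q • t₂))) u
  simp only [smul_eq_mul]
  rcases eq_or_lt_of_le hp with hp0 | hp0
  · have hq1 : q = 1 := by linarith
    subst hq1
    have hp1 : p = 0 := hp0.symm
    subst hp1
    simp
  rcases eq_or_lt_of_le hq with hq0 | hq0
  · have hq1 : q = 0 := hq0.symm
    subst hq1
    have hp1 : p = 1 := by linarith
    subst hp1
    simp
  -- both positive
  have h1 : suppFn (wulff (g t₁)) u
      ≤ (suppFn (wulff (g (p • t₁ + q • t₂))) u - q * suppFn (wulff (g t₂)) u) / p := by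
    refine csSup_le (hne t₁ ht₁) ?_
    rintro y ⟨x₁, hx₁, rfl⟩
    rw [le_div_iff₀ hp0]
    have h2 : suppFn (wulff (g t₂)) u
        ≤ (suppFn (wulff (g (p • t₁ + q • t₂))) u - p * (inner ℝ x₁ u : ℝ)) / q := by
      refine csSup_le (hne t₂ ht₂) ?_
      rintro z ⟨x₂, hx₂, rfl⟩
      rw [le_div_iff₀ hq0]
      have := key x₁ hx₁ x₂ hx₂
      linarith
    rw [le_div_iff₀ hq0] at h2
    linarith
  rw [le_div_iff₀ hp0] at h1
  simp only [smul_eq_mul] at h1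
  linarith

end
end

section
/- Let K be a convex body in ℝⁿ containing the origin in its interior and let f:S^{n−1}→ℝ be continuous, with K_t(f)=W(h_K+tf) defined for t in an interval (a,b) around 0 on which h_K+tf > 0 pointwise. Then for S_K-almost every u ∈ S^{n−1}, the function t ↦ h_{K_t(f)}(u) is differentiable at t=0 with derivative f(u); that is, lim_{t→0} (h_{K_t(f)}(u) − h_K(u))/t = f(u) for S_K-almost every u. -/
open scoped Pointwise NNReal ENNReal
open MeasureTheory Metric Set Filter

noncomputable section

open scoped Topology

namespace SWAux

variable {n : ℕ} {K : Set (Euc n)}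

lemma bddAbove_inner_image (hK : IsCompact K) (u : Euc n) :
    BddAbove ((fun x => (inner ℝ x u : ℝ)) '' K) :=
  (hK.image (continuous_id.inner continuous_const)).bddAbove

lemma inner_le_suppFn (hK : IsCompact K) {x : Euc n} (hx : x ∈ K) (u : Euc n) :
    (inner ℝ x u : ℝ) ≤ suppFn K u :=
  le_csSup (bddAbove_inner_image hK u) ⟨x, hx, rfl⟩

lemma suppFn_le (hne : K.Nonempty) {u : Euc n} {c : ℝ}
    (h : ∀ x ∈ K, (inner ℝ x u : ℝ) ≤ c) : suppFn K u ≤ c :=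
  csSup_le (hne.image _) (by rintro _ ⟨x, hx, rfl⟩; exact h x hx)

lemma exists_inner_eq_suppFn (hK : IsCompact K) (hne : K.Nonempty) (u : Euc n) :
    ∃ x ∈ K, (inner ℝ x u : ℝ) = suppFn K u := by
  have hcont : ContinuousOn (fun x : Euc n => (inner ℝ x u : ℝ)) K :=
    (continuous_id.inner continuous_const).continuousOn
  obtain ⟨x, hxK, hmax⟩ := hK.exists_isMaxOn hne hcont
  refine ⟨x, hxK, le_antisymm (inner_le_suppFn hK hxK u) (suppFn_le ⟨x, hxK⟩ ?_)⟩
  exact fun y hy => hmax hy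

lemma suppFn_sub_le (hK : IsCompact K) (hne : K.Nonempty) {R : ℝ}
    (hR : ∀ x ∈ K, ‖x‖ ≤ R) (u v : Euc n) :
    suppFn K u ≤ suppFn K v + R * ‖u - v‖ := by
  refine suppFn_le hne fun x hx => ?_
  have h1 : (inner ℝ x u : ℝ) = (inner ℝ x v : ℝ) + (inner ℝ x (u - v) : ℝ) := by
    rw [inner_sub_right]; ring
  have h2 : (inner ℝ x (u - v) : ℝ) ≤ ‖x‖ * ‖u - v‖ := real_inner_le_norm _ _
  have h3 : ‖x‖ * ‖u - v‖ ≤ R * ‖u - v‖ :=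
    mul_le_mul_of_nonneg_right (hR x hx) (norm_nonneg _)
  have h4 := inner_le_suppFn hK hx v
  linarith

lemma continuous_suppFn (hK : IsCompact K) (hne : K.Nonempty) :
    Continuous (suppFn K) := by
  obtain ⟨R, hR⟩ := hK.isBounded.subset_closedBall 0
  have hR' : ∀ x ∈ K, ‖x‖ ≤ R := fun x hx => by
    simpa [Metric.mem_closedBall, dist_zero_right] using hR hx
  have hR0 : 0 ≤ R := le_trans (norm_nonneg _) (hR' _ hne.some_mem)
  have key : LipschitzWith R.toNNReal (suppFn K) := by
    refine LipschitzWith.of_dist_le_mul fun u v => ?_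
    rw [Real.dist_eq]
    have h1 := suppFn_sub_le hK hne hR' u v
    have h2 := suppFn_sub_le hK hne hR' v u
    rw [abs_le]
    constructor
    · have : ‖v - u‖ = dist u v := by rw [dist_eq_norm, norm_sub_rev]
      rw [Real.coe_toNNReal _ hR0]; rw [this] at h2; linarith
    · have : ‖u - v‖ = dist u v := by rw [dist_eq_norm]
      rw [Real.coe_toNNReal _ hR0]; rw [this] at h1; linarith
  exact key.continuous

lemma mem_wulff_suppFn (hK : IsCompact K) {x : Euc n} (hx : x ∈ K) :
    x ∈ wulff (suppFn K) := fun u _ => inner_le_suppFn hK hx u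

lemma wulff_suppFn_eq (hconv : Convex ℝ K) (hK : IsCompact K) (h0 : (0 : Euc n) ∈ K) :
    wulff (suppFn K) = K := by
  ext x
  refine ⟨fun hx => ?_, fun hx => mem_wulff_suppFn hK hx⟩
  by_contra hxK
  obtain ⟨f, c, hfc, hcx⟩ := geometric_hahn_banach_closed_point hconv hK.isClosed hxK
  set z := (InnerProductSpace.toDual ℝ (Euc n)).symm f with hz
  have hfz : ∀ w, f w = (inner ℝ z w : ℝ) := by
    intro w
    have : f = InnerProductSpace.toDual ℝ (Euc n) z := by
      rw [hz, LinearIsometryEquiv.apply_symm_apply]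
    rw [this]; rfl
  have hz0 : z ≠ 0 := by
    intro h
    have h1 := hfc 0 h0
    have h2 : f 0 = 0 := by simp
    have h3 : f x = 0 := by rw [hfz, h, inner_zero_left]
    rw [h2] at h1; rw [h3] at hcx; linarith
  have hznorm : 0 < ‖z‖ := norm_pos_iff.2 hz0
  set v : Euc n := ‖z‖⁻¹ • z with hv
  have hvn : ‖v‖ = 1 := by
    rw [hv, norm_smul, norm_inv, norm_norm, inv_mul_cancel₀ hznorm.ne']
  have hsupp : suppFn K v ≤ ‖z‖⁻¹ * c := by
    refine suppFn_le ⟨0, h0⟩ fun y hy => ?_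
    have : (inner ℝ y v : ℝ) = ‖z‖⁻¹ * f y := by
      rw [hv, real_inner_smul_right, hfz, real_inner_comm]
    rw [this]
    exact mul_le_mul_of_nonneg_left (hfc y hy).le (by positivity)
  have hxv : (inner ℝ x v : ℝ) = ‖z‖⁻¹ * f x := by
    rw [hv, real_inner_smul_right, hfz, real_inner_comm]
  have := hx v hvn
  rw [hxv] at this
  have : ‖z‖⁻¹ * f x ≤ ‖z‖⁻¹ * c := le_trans this hsupp
  have := (mul_le_mul_iff_right₀ (by positivity : (0:ℝ) < ‖z‖⁻¹)).1 this
  linarith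


set_option maxHeartbeats 1000000 in
lemma aleksandrov_pointwise
    (hconv : Convex ℝ K) (hK : IsCompact K) (h0 : (0 : Euc n) ∈ interior K)
    {f : Euc n → ℝ} (hf : Continuous f)
    {a b : ℝ} (ha : a < 0) (hb : 0 < b)
    (hpos : ∀ t ∈ Set.Ioo a b, ∀ u : Euc n, ‖u‖ = 1 → 0 < suppFn K u + t * f u)
    {u : Euc n} (hu : ‖u‖ = 1) {x₀ : Euc n} (hx₀K : x₀ ∈ K)
    (hx₀u : (inner ℝ x₀ u : ℝ) = suppFn K u)
    (huniq : ∀ v : Euc n, ‖v‖ = 1 → (inner ℝ x₀ v : ℝ) = suppFn K v → v = u) :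
    HasDerivAt (fun t => suppFn (wulff (fun v => suppFn K v + t * f v)) u) (f u) 0 := by
  have h0K : (0 : Euc n) ∈ K := interior_subset h0
  have hne : K.Nonempty := ⟨0, h0K⟩
  set h : Euc n → ℝ := suppFn K with hh
  set S : Set (Euc n) := {v | ‖v‖ = 1} with hS
  have hScomp : IsCompact S := by
    have : S = Metric.sphere (0 : Euc n) 1 := by
      ext v; simp [hS, mem_sphere_zero_iff_norm]
    rw [this]; exact isCompact_sphere 0 1
  have huS : u ∈ S := hu
  -- bound on K
  obtain ⟨R, hRK⟩ := hK.isBounded.subset_closedBall 0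
  have hRb : ∀ x ∈ K, ‖x‖ ≤ R := fun x hx => by
    simpa [Metric.mem_closedBall, dist_zero_right] using hRK hx
  have hR0 : 0 ≤ R := le_trans (norm_nonneg _) (hRb _ h0K)
  -- bounds for h on S
  have hhub : ∀ v ∈ S, h v ≤ R := by
    intro v hv
    refine suppFn_le hne fun x hx => ?_
    calc (inner ℝ x v : ℝ) ≤ ‖x‖ * ‖v‖ := real_inner_le_norm _ _
    _ ≤ R := by rw [hv]; simpa using hRb x hx
  have hh0 : ∀ v ∈ S, 0 ≤ h v := fun v hv => by
    have := inner_le_suppFn hK h0K v; simpa using this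
  -- bound for f on S
  obtain ⟨Mf, hMf0, hMfb⟩ : ∃ Mf : ℝ, 0 < Mf ∧ ∀ v ∈ S, |f v| ≤ Mf := by
    have hcont : ContinuousOn (fun v : Euc n => |f v|) S := (hf.abs).continuousOn
    obtain ⟨v₀, hv₀S, hv₀⟩ := hScomp.exists_isMaxOn ⟨u, huS⟩ hcont
    exact ⟨|f v₀| + 1, by positivity, fun v hv => by have := hv₀ hv; simp at this ⊢; linarith⟩
  -- inradius
  obtain ⟨r, hr0, hrK⟩ : ∃ r > 0, Metric.ball (0 : Euc n) r ⊆ K := by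
    rw [mem_interior_iff_mem_nhds, Metric.mem_nhds_iff] at h0
    exact h0
  have hrh : ∀ v ∈ S, r / 2 ≤ h v := by
    intro v hv
    have hmem : (r / 2) • v ∈ K := by
      apply hrK
      rw [Metric.mem_ball, dist_zero_right, norm_smul, hv, mul_one, Real.norm_eq_abs,
        abs_of_pos (by linarith : (0:ℝ) < r / 2)]
      linarith
    have := inner_le_suppFn hK hmem v
    rwa [real_inner_smul_left, real_inner_self_eq_norm_sq, hv, one_pow, mul_one] at this
  set r2 : ℝ := r / 4 with hr2
  have hr20 : 0 < r2 := by rw [hr2]; linarith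
  set t₂ : ℝ := r / (4 * Mf) with ht₂
  have ht₂0 : 0 < t₂ := by rw [ht₂]; positivity
  have hgt : ∀ t : ℝ, |t| ≤ t₂ → ∀ v ∈ S, r2 ≤ h v + t * f v := by
    intro t ht v hv
    have h1 : t * f v ≥ -(|t| * Mf) := by
      have : |t * f v| ≤ |t| * Mf := by
        rw [abs_mul]
        exact mul_le_mul_of_nonneg_left (hMfb v hv) (abs_nonneg _)
      have := neg_abs_le (t * f v); linarith [abs_le.1 ‹|t * f v| ≤ |t| * Mf›]
    have h2 : |t| * Mf ≤ t₂ * Mf := mul_le_mul_of_nonneg_right ht hMf0.le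
    have h3 : t₂ * Mf = r / 4 := by rw [ht₂]; field_simp
    have := hrh v hv
    rw [hr2]; linarith
  -- nonemptiness and bound for wulff bodies
  have hmem0 : ∀ t ∈ Set.Ioo a b, (0 : Euc n) ∈ wulff (fun v => h v + t * f v) := by
    intro t ht v hv
    have := hpos t ht v hv
    simpa using this.le
  have hKtb : ∀ t : ℝ, |t| ≤ t₂ → ∀ x ∈ wulff (fun v => h v + t * f v), ‖x‖ ≤ R + t₂ * Mf := by
    intro t ht x hx
    rcases eq_or_ne x 0 with rfl | hx0
    · simp; positivity
    · set v : Euc n := ‖x‖⁻¹ • x with hv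
      have hxn : 0 < ‖x‖ := norm_pos_iff.2 hx0
      have hvS : v ∈ S := by
        show ‖v‖ = 1
        rw [hv, norm_smul, norm_inv, norm_norm, inv_mul_cancel₀ hxn.ne']
      have h1 : (inner ℝ x v : ℝ) ≤ h v + t * f v := hx v hvS
      have h2 : (inner ℝ x v : ℝ) = ‖x‖ := by
        rw [hv, real_inner_smul_right, real_inner_self_eq_norm_sq, sq,
          inv_mul_cancel_left₀ hxn.ne']
      have h3 : h v ≤ R := hhub v hvS
      have h4 : t * f v ≤ t₂ * Mf := by
        calc t * f v ≤ |t * f v| := le_abs_self _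
        _ ≤ |t| * Mf := by
            rw [abs_mul]; exact mul_le_mul_of_nonneg_left (hMfb v hvS) (abs_nonneg _)
        _ ≤ t₂ * Mf := mul_le_mul_of_nonneg_right ht hMf0.le
      rw [h2] at h1; linarith
  have hbdd : ∀ t : ℝ, |t| ≤ t₂ →
      BddAbove ((fun x => (inner ℝ x u : ℝ)) '' wulff (fun v => h v + t * f v)) := by
    intro t ht
    refine ⟨R + t₂ * Mf, ?_⟩
    rintro _ ⟨x, hx, rfl⟩
    calc (inner ℝ x u : ℝ) ≤ ‖x‖ * ‖u‖ := real_inner_le_norm _ _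
    _ ≤ R + t₂ * Mf := by rw [hu, mul_one]; exact hKtb t ht x hx
  -- value at 0
  have hF0 : suppFn (wulff (fun v => h v + (0:ℝ) * f v)) u = h u := by
    have heq : (fun v => h v + (0:ℝ) * f v) = suppFn K := by funext v; rw [hh]; ring
    rw [heq, wulff_suppFn_eq hconv hK h0K]
  -- upper bound
  have hupper : ∀ t ∈ Set.Ioo a b,
      suppFn (wulff (fun v => h v + t * f v)) u ≤ h u + t * f u := by
    intro t ht
    have hne' : ((fun x => (inner ℝ x u : ℝ)) '' wulff (fun v => h v + t * f v)).Nonempty :=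
      ⟨_, ⟨0, hmem0 t ht, rfl⟩⟩
    refine csSup_le hne' ?_
    rintro _ ⟨x, hx, rfl⟩
    exact hx u hu
  -- main little-o estimate
  rw [hasDerivAt_iff_isLittleO, Asymptotics.isLittleO_iff]
  intro c hc
  set ε' : ℝ := c * r2 / (R + Mf) with hε'
  have hε'0 : 0 < ε' := by rw [hε']; positivity
  -- continuity of the correction term
  have hφcont : ContinuousAt (fun v : Euc n => f u * (inner ℝ u v : ℝ) - f v) u :=
    ((continuous_const.mul (continuous_const.inner continuous_id)).sub hf).continuousAt
  have hφu : f u * (inner ℝ u u : ℝ) - f u = 0 := by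
    rw [real_inner_self_eq_norm_sq, hu]; ring
  obtain ⟨δ, hδ0, hδ⟩ : ∃ δ > 0, ∀ v : Euc n, dist v u < δ →
      |f u * (inner ℝ u v : ℝ) - f v| < ε' := by
    have := Metric.continuousAt_iff.1 hφcont ε' hε'0
    obtain ⟨δ, hδ0, hδ⟩ := this
    refine ⟨δ, hδ0, fun v hv => ?_⟩
    have := hδ hv
    rwa [Real.dist_eq, hφu, sub_zero] at this
  -- far-region gap
  set Sδ : Set (Euc n) := S ∩ {v | δ ≤ dist v u} with hSδ
  obtain ⟨c₀, hc₀0, hc₀⟩ : ∃ c₀ > 0, ∀ v ∈ Sδ, (inner ℝ x₀ v : ℝ) + c₀ ≤ h v := by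
    by_cases hne'' : Sδ.Nonempty
    · have hcomp : IsCompact Sδ := hScomp.inter_right
        (isClosed_le continuous_const (continuous_id.dist continuous_const))
      have hcont : ContinuousOn (fun v : Euc n => h v - (inner ℝ x₀ v : ℝ)) Sδ :=
        ((continuous_suppFn hK hne).sub (continuous_const.inner continuous_id)).continuousOn
      obtain ⟨v₀, hv₀S, hv₀⟩ := hcomp.exists_isMinOn hne'' hcont
      have hpos' : 0 < h v₀ - (inner ℝ x₀ v₀ : ℝ) := by
        rcases lt_or_eq_of_le (inner_le_suppFn hK hx₀K v₀) with hlt | heq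
        · linarith
        · exfalso
          have hv₀u : v₀ = u := huniq v₀ hv₀S.1 heq
          have hd : δ ≤ dist v₀ u := hv₀S.2
          rw [hv₀u, dist_self] at hd
          linarith
      refine ⟨h v₀ - (inner ℝ x₀ v₀ : ℝ), hpos', fun v hv => ?_⟩
      have h2 : h v₀ - (inner ℝ x₀ v₀ : ℝ) ≤ h v - (inner ℝ x₀ v : ℝ) := hv₀ hv
      linarith
    · exact ⟨1, one_pos, fun v hv => absurd ⟨v, hv⟩ hne''⟩
  -- threshold
  set t₀ : ℝ := min (min t₂ (c₀ / (2 * Mf))) (min (r2 / ε') (min (min (-a / 2) (b / 2)) 1))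
    with ht₀
  have ht₀0 : 0 < t₀ := by
    rw [ht₀]
    refine lt_min (lt_min ht₂0 (by positivity)) (lt_min (by positivity)
      (lt_min (lt_min (by linarith) (by linarith)) one_pos))
  rw [Metric.eventually_nhds_iff]
  refine ⟨t₀, ht₀0, fun {t} hdist => ?_⟩
  rw [dist_zero_right, Real.norm_eq_abs] at hdist
  have htt₂ : |t| ≤ t₂ := le_trans hdist.le (by rw [ht₀]; exact le_trans (min_le_left _ _) (min_le_left _ _))
  have htc₀ : 2 * Mf * |t| ≤ c₀ := by
    have : |t| ≤ c₀ / (2 * Mf) := le_trans hdist.le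
      (by rw [ht₀]; exact le_trans (min_le_left _ _) (min_le_right _ _))
    calc 2 * Mf * |t| ≤ 2 * Mf * (c₀ / (2 * Mf)) :=
          mul_le_mul_of_nonneg_left this (by positivity)
    _ = c₀ := by field_simp
  have htlam : |t| * ε' ≤ r2 := by
    have : |t| ≤ r2 / ε' := le_trans hdist.le
      (by rw [ht₀]; exact le_trans (min_le_right _ _) (min_le_left _ _))
    calc |t| * ε' ≤ (r2 / ε') * ε' := mul_le_mul_of_nonneg_right this hε'0.le
    _ = r2 := by field_simp
  have htab : t ∈ Set.Ioo a b := by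
    have h1 : |t| ≤ -a / 2 := le_trans hdist.le (by
      rw [ht₀]
      exact le_trans (min_le_right _ _) (le_trans (min_le_right _ _)
        (le_trans (min_le_left _ _) (min_le_left _ _))))
    have h2 : |t| ≤ b / 2 := le_trans hdist.le (by
      rw [ht₀]
      exact le_trans (min_le_right _ _) (le_trans (min_le_right _ _)
        (le_trans (min_le_left _ _) (min_le_right _ _))))
    have := abs_le.1 h1
    have := abs_le.1 h2
    constructor <;> [linarith [(abs_le.1 h1).1]; linarith [(abs_le.1 h2).2]]
  have ht1 : |t| ≤ 1 := le_trans hdist.le (by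
    rw [ht₀]
    exact le_trans (min_le_right _ _) (le_trans (min_le_right _ _) (min_le_right _ _)))
  -- the approximating point
  set zt : Euc n := x₀ + (t * f u) • u with hzt
  have hztv : ∀ v : Euc n, (inner ℝ zt v : ℝ) = (inner ℝ x₀ v : ℝ) + (t * f u) * (inner ℝ u v : ℝ) := by
    intro v
    rw [hzt, inner_add_left, real_inner_smul_left]
  have hztb : ∀ v ∈ S, (inner ℝ zt v : ℝ) ≤ h v + t * f v + |t| * ε' := by
    intro v hv
    rw [hztv v]
    by_cases hd : dist v u < δ
    · have h1 : (inner ℝ x₀ v : ℝ) ≤ h v := inner_le_suppFn hK hx₀K v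
      have h2 : (t * f u) * (inner ℝ u v : ℝ) - t * f v = t * (f u * (inner ℝ u v : ℝ) - f v) := by
        ring
      have h3 : t * (f u * (inner ℝ u v : ℝ) - f v) ≤ |t| * ε' := by
        calc t * (f u * (inner ℝ u v : ℝ) - f v) ≤ |t * (f u * (inner ℝ u v : ℝ) - f v)| :=
              le_abs_self _
        _ = |t| * |f u * (inner ℝ u v : ℝ) - f v| := abs_mul _ _
        _ ≤ |t| * ε' := mul_le_mul_of_nonneg_left (hδ v hd).le (abs_nonneg _)
      linarith
    · have hvSδ : v ∈ Sδ := ⟨hv, not_lt.1 hd⟩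
      have h1 := hc₀ v hvSδ
      have h2 : (t * f u) * (inner ℝ u v : ℝ) ≤ Mf * |t| := by
        calc (t * f u) * (inner ℝ u v : ℝ) ≤ |(t * f u) * (inner ℝ u v : ℝ)| := le_abs_self _
        _ = |t| * |f u| * |(inner ℝ u v : ℝ)| := by rw [abs_mul, abs_mul]
        _ ≤ |t| * Mf * 1 := by
            apply mul_le_mul
            · exact mul_le_mul_of_nonneg_left (hMfb u huS) (abs_nonneg _)
            · calc |(inner ℝ u v : ℝ)| ≤ ‖u‖ * ‖v‖ := abs_real_inner_le_norm _ _
              _ = 1 := by rw [hu, hv.out, mul_one]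
            · exact abs_nonneg _
            · positivity
        _ = Mf * |t| := by ring
      have h3 : -(Mf * |t|) ≤ t * f v := by
        have : |t * f v| ≤ |t| * Mf := by
          rw [abs_mul]; exact mul_le_mul_of_nonneg_left (hMfb v hv) (abs_nonneg _)
        have := (abs_le.1 this).1; linarith
      have h4 : 0 ≤ |t| * ε' := by positivity
      linarith
  set lam : ℝ := |t| * ε' / r2 with hlam
  have hlam0 : 0 ≤ lam := by rw [hlam]; positivity
  have hlam1 : lam ≤ 1 := by
    rw [hlam, div_le_one hr20]; exact htlam
  set xt : Euc n := (1 - lam) • zt with hxt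
  have hxtmem : xt ∈ wulff (fun v => h v + t * f v) := by
    intro v hv
    have hvS : v ∈ S := hv
    have hg : r2 ≤ h v + t * f v := hgt t htt₂ v hvS
    have hz := hztb v hvS
    show (inner ℝ xt v : ℝ) ≤ h v + t * f v
    rw [hxt, real_inner_smul_left]
    rcases le_or_gt (inner ℝ zt v : ℝ) r2 with hle | hlt
    · rcases le_or_gt (inner ℝ zt v : ℝ) 0 with hle0 | hgt0
      · have : (1 - lam) * (inner ℝ zt v : ℝ) ≤ 0 := mul_nonpos_of_nonneg_of_nonpos
          (by linarith) hle0
        linarith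
      · have : (1 - lam) * (inner ℝ zt v : ℝ) ≤ 1 * (inner ℝ zt v : ℝ) :=
          mul_le_mul_of_nonneg_right (by linarith) hgt0.le
        linarith [one_mul (inner ℝ zt v : ℝ)]
    · have h5 : lam * r2 ≤ lam * (inner ℝ zt v : ℝ) :=
        mul_le_mul_of_nonneg_left hlt.le hlam0
      have h6 : lam * r2 = |t| * ε' := by
        rw [hlam]; field_simp
      nlinarith
  have hlow : (1 - lam) * (h u + t * f u) ≤
      suppFn (wulff (fun v => h v + t * f v)) u := by
    have hmem' : (inner ℝ xt u : ℝ) ∈ (fun x => (inner ℝ x u : ℝ)) ''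
        wulff (fun v => h v + t * f v) := ⟨xt, hxtmem, rfl⟩
    have := le_csSup (hbdd t htt₂) hmem'
    have hval : (inner ℝ xt u : ℝ) = (1 - lam) * (h u + t * f u) := by
      rw [hxt, real_inner_smul_left, hztv u, real_inner_self_eq_norm_sq, hu, hx₀u]
      ring
    rw [hval] at this
    exact this
  -- conclude
  have hup := hupper t htab
  have hFub : h u + t * f u ≤ R + Mf := by
    have h1 : h u ≤ R := hhub u huS
    have h2 : t * f u ≤ Mf := by
      calc t * f u ≤ |t * f u| := le_abs_self _
      _ ≤ |t| * Mf := by rw [abs_mul]; exact mul_le_mul_of_nonneg_left (hMfb u huS) (abs_nonneg _)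
      _ ≤ 1 * Mf := mul_le_mul_of_nonneg_right ht1 hMf0.le
      _ = Mf := one_mul _
    linarith
  have hFlb : 0 ≤ h u + t * f u := by
    have := hpos t htab u hu
    linarith
  have hRMf0 : (0:ℝ) < R + Mf := by linarith
  have hlamRM : lam * (R + Mf) = c * |t| := by
    rw [hlam, hε']
    field_simp
  have hkey1 : h u + t * f u - c * |t| ≤ suppFn (wulff (fun v => h v + t * f v)) u := by
    have h2 : lam * (h u + t * f u) ≤ lam * (R + Mf) :=
      mul_le_mul_of_nonneg_left hFub hlam0
    have h3 : (1 - lam) * (h u + t * f u) = (h u + t * f u) - lam * (h u + t * f u) := by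
      ring
    linarith [hlow]
  have hkey : |suppFn (wulff (fun v => h v + t * f v)) u - (h u + t * f u)| ≤ c * |t| := by
    rw [abs_le]
    constructor
    · linarith
    · have h0' : 0 ≤ c * |t| := by positivity
      linarith
  have hgoal : ‖(fun t => suppFn (wulff (fun v => suppFn K v + t * f v)) u) t -
      (fun t => suppFn (wulff (fun v => suppFn K v + t * f v)) u) 0 - (t - 0) • f u‖ ≤
      c * ‖t - 0‖ := by
    simp only [sub_zero, smul_eq_mul, Real.norm_eq_abs]
    rw [hF0]
    have : suppFn (wulff (fun v => suppFn K v + t * f v)) u - h u - t * f u =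
        suppFn (wulff (fun v => h v + t * f v)) u - (h u + t * f u) := by
      rw [hh]; ring
    rw [this]
    exact hkey
  exact hgoal


-- ==================== smooth points ====================

def SmoothPt {n : ℕ} (K : Set (Euc n)) (x : Euc n) : Prop :=
  x ∈ K ∧ ∀ v w : Euc n, ‖v‖ = 1 → ‖w‖ = 1 →
    (inner ℝ x v : ℝ) = suppFn K v → (inner ℝ x w : ℝ) = suppFn K w → v = w

-- ==================== chart basics ====================

section Chart

variable {m : ℕ}

def phi (i : Fin (m + 1)) (y : Euc m) (s : ℝ) : Euc (m + 1) :=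
  WithLp.toLp 2 (i.insertNth s y : Fin (m+1) → ℝ)

def pr (i : Fin (m + 1)) (x : Euc (m + 1)) : Euc m := WithLp.toLp 2 (i.removeNth x : Fin m → ℝ)

variable (i : Fin (m + 1))

lemma inner_phi (y : Euc m) (s : ℝ) (v : Euc (m+1)) :
    (inner ℝ (phi i y s) v : ℝ) = (inner ℝ y (pr i v) : ℝ) + s * v i := by
  simp only [PiLp.inner_apply, RCLike.inner_apply, conj_trivial]
  rw [Fin.sum_univ_succAbove (fun j => v j * phi i y s j) i]
  simp [phi, pr, Fin.removeNth]
  ring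

lemma phi_pr (x : Euc (m+1)) : phi i (pr i x) (x i) = x := by
  simp [phi, pr, Fin.insertNth_self_removeNth]

lemma pr_phi (y : Euc m) (s : ℝ) : pr i (phi i y s) = y := by
  ext j; simp [phi, pr, Fin.removeNth, Fin.insertNth_apply_succAbove]

lemma phi_apply_same (y : Euc m) (s : ℝ) : phi i y s i = s := by
  simp [phi]

lemma phi_add (y y' : Euc m) (s s' : ℝ) :
    phi i (y + y') (s + s') = phi i y s + phi i y' s' :=
  congrArg (WithLp.toLp 2) (Fin.insertNth_add (α := fun _ : Fin (m+1) => ℝ) i s s' y y')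

lemma phi_smul (a : ℝ) (y : Euc m) (s : ℝ) : phi i (a • y) (a * s) = a • phi i y s := by
  ext j
  rcases eq_or_ne j i with rfl | hj
  · simp [phi]
  · obtain ⟨k, rfl⟩ := Fin.exists_succAbove_eq hj
    simp [phi, Fin.insertNth_apply_succAbove]

lemma phi_sub (y y' : Euc m) (s s' : ℝ) :
    phi i (y - y') (s - s') = phi i y s - phi i y' s' :=
  congrArg (WithLp.toLp 2) (Fin.insertNth_sub (α := fun _ : Fin (m+1) => ℝ) i s s' y y')

lemma norm_phi (y : Euc m) (s : ℝ) : ‖phi i y s‖ ^ 2 = ‖y‖ ^ 2 + s ^ 2 := by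
  rw [← real_inner_self_eq_norm_sq, ← real_inner_self_eq_norm_sq, inner_phi, pr_phi,
    phi_apply_same]
  ring

lemma norm_phi_le (y : Euc m) (s : ℝ) : ‖phi i y s‖ ≤ ‖y‖ + |s| := by
  have h2 := norm_phi i y s
  nlinarith [norm_nonneg (phi i y s), norm_nonneg y, abs_nonneg s, sq_abs s]

lemma norm_le_phi (y : Euc m) (s : ℝ) : ‖y‖ ≤ ‖phi i y s‖ ∧ |s| ≤ ‖phi i y s‖ := by
  have h2 := norm_phi i y s
  constructor
  · nlinarith [norm_nonneg (phi i y s), norm_nonneg y]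
  · nlinarith [norm_nonneg (phi i y s), abs_nonneg s, sq_abs s]

lemma pr_sub (x x' : Euc (m+1)) : pr i (x - x') = pr i x - pr i x' := rfl

lemma norm_pr_le (x : Euc (m+1)) : ‖pr i x‖ ≤ ‖x‖ := by
  have := (norm_le_phi i (pr i x) (x i)).1
  rwa [phi_pr] at this

lemma abs_apply_le (x : Euc (m+1)) : |x i| ≤ ‖x‖ := by
  have := (norm_le_phi i (pr i x) (x i)).2
  rwa [phi_pr] at this

lemma continuous_pr : Continuous (pr i) := by
  refine (LipschitzWith.of_dist_le_mul (K := 1) fun x x' => ?_).continuous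
  rw [dist_eq_norm, dist_eq_norm, ← pr_sub, NNReal.coe_one, one_mul]
  exact norm_pr_le i _

lemma continuous_phi_fixed (y : Euc m) : Continuous (phi i y) := by
  refine (LipschitzWith.of_dist_le_mul (K := 1) fun s s' => ?_).continuous
  rw [dist_eq_norm, dist_eq_norm, NNReal.coe_one, one_mul]
  have : phi i y s - phi i y s' = phi i (y - y) (s - s') := (phi_sub i y y s s').symm
  rw [this, sub_self]
  have := norm_phi_le i (0 : Euc m) (s - s')
  simpa [Real.dist_eq] using this

-- ==================== the fiber function ====================

variable {K : Set (Euc (m+1))}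

def fib (i : Fin (m + 1)) (K : Set (Euc (m+1))) (y : Euc m) : Set ℝ := {s | phi i y s ∈ K}

def gfn (i : Fin (m + 1)) (K : Set (Euc (m+1))) (y : Euc m) : ℝ := sSup (fib i K y)

lemma mem_fib_self {x : Euc (m+1)} (hx : x ∈ K) : x i ∈ fib i K (pr i x) := by
  show phi i (pr i x) (x i) ∈ K
  rw [phi_pr]; exact hx

lemma fib_compact (hK : IsCompact K) (y : Euc m) : IsCompact (fib i K y) := by
  obtain ⟨R, hRK⟩ := hK.isBounded.subset_closedBall 0
  have hRb : ∀ x ∈ K, ‖x‖ ≤ R := fun x hx => by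
    simpa [Metric.mem_closedBall, dist_zero_right] using hRK hx
  have hclosed : IsClosed (fib i K y) :=
    IsClosed.preimage (continuous_phi_fixed i y) hK.isClosed
  refine IsCompact.of_isClosed_subset (isCompact_Icc (a := -R) (b := R)) hclosed ?_
  intro s hs
  have h1 : |s| ≤ ‖phi i y s‖ := by
    have := (norm_le_phi i y s).2; simpa using this
  have h2 : ‖phi i y s‖ ≤ R := hRb _ hs
  have := abs_le.1 (le_trans h1 h2)
  exact ⟨this.1, this.2⟩

lemma fib_nonempty {y : Euc m} (hy : y ∈ pr i '' K) : (fib i K y).Nonempty := by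
  obtain ⟨x, hxK, rfl⟩ := hy
  exact ⟨x i, mem_fib_self i hxK⟩

lemma gfn_mem (hK : IsCompact K) {y : Euc m} (hy : y ∈ pr i '' K) :
    phi i y (gfn i K y) ∈ K :=
  (fib_compact i hK y).sSup_mem (fib_nonempty i hy)

lemma le_gfn (hK : IsCompact K) {y : Euc m} {s : ℝ} (hs : s ∈ fib i K y) :
    s ≤ gfn i K y :=
  le_csSup (fib_compact i hK y).bddAbove hs

lemma pr_linear : IsLinearMap ℝ (pr i) := ⟨fun _ _ => rfl, fun _ _ => rfl⟩

lemma Y_convex (hconv : Convex ℝ K) : Convex ℝ (pr i '' K) :=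
  hconv.is_linear_image (pr_linear i)

lemma Y_compact (hK : IsCompact K) : IsCompact (pr i '' K) := hK.image (continuous_pr i)

lemma gfn_concave (hconv : Convex ℝ K) (hK : IsCompact K) :
    ConcaveOn ℝ (pr i '' K) (gfn i K) := by
  refine ⟨Y_convex i hconv, fun y₁ h₁ y₂ h₂ a b ha hb hab => ?_⟩
  have hmem : phi i (a • y₁ + b • y₂) (a * gfn i K y₁ + b * gfn i K y₂) ∈ K := by
    rw [phi_add, phi_smul, phi_smul]
    exact hconv (gfn_mem i hK h₁) (gfn_mem i hK h₂) ha hb hab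
  have hY : a • y₁ + b • y₂ ∈ pr i '' K := Y_convex i hconv h₁ h₂ ha hb hab
  have := le_gfn i hK (y := a • y₁ + b • y₂) hmem
  simpa using this

lemma top_char (hK : IsCompact K) {x : Euc (m+1)} (hx : x ∈ K) {v : Euc (m+1)}
    (hvi : 0 < v i) (hnv : (inner ℝ x v : ℝ) = suppFn K v) :
    x i = gfn i K (pr i x) := by
  refine le_antisymm (le_gfn i hK (mem_fib_self i hx)) ?_
  refine csSup_le (fib_nonempty i ⟨x, hx, rfl⟩) fun s hs => ?_
  have h1 : (inner ℝ (phi i (pr i x) s) v : ℝ) ≤ suppFn K v := inner_le_suppFn hK hs v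
  rw [← hnv] at h1
  have h2 : (inner ℝ x v : ℝ) = (inner ℝ (pr i x) (pr i v) : ℝ) + x i * v i := by
    conv_lhs => rw [← phi_pr i x]
    rw [inner_phi]
  rw [inner_phi, h2] at h1
  nlinarith

lemma top_eq (hK : IsCompact K) {x : Euc (m+1)} (hx : x ∈ K) {v : Euc (m+1)}
    (hvi : 0 < v i) (hnv : (inner ℝ x v : ℝ) = suppFn K v) :
    x = phi i (pr i x) (gfn i K (pr i x)) := by
  rw [← top_char i hK hx hvi hnv, phi_pr]

lemma interior_below (hconv : Convex ℝ K) (hK : IsCompact K)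
    (hint : (interior K).Nonempty) {y : Euc m} (hy : y ∈ interior (pr i '' K)) :
    ∃ s₀ : ℝ, s₀ < gfn i K y ∧ phi i y s₀ ∈ K := by
  obtain ⟨w, hw⟩ := hint
  -- find an interior point of K over y
  obtain ⟨x', hx'⟩ : ∃ x' : Euc (m+1), x' ∈ interior K ∧ pr i x' = y := by
    rcases eq_or_ne (pr i w) y with heq | hne
    · exact ⟨w, hw, heq⟩
    · obtain ⟨r, hr0, hrY⟩ : ∃ r > 0, Metric.ball y r ⊆ pr i '' K := by
        rw [mem_interior_iff_mem_nhds, Metric.mem_nhds_iff] at hy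
        exact hy
      have hdist : 0 < ‖y - pr i w‖ := by
        rw [norm_sub_pos_iff]; exact fun h => hne h.symm
      set θ : ℝ := r / (2 * ‖y - pr i w‖) with hθ
      have hθ0 : 0 < θ := by positivity
      set y' : Euc m := y + θ • (y - pr i w) with hy'
      have hy'Y : y' ∈ pr i '' K := by
        apply hrY
        rw [Metric.mem_ball, dist_eq_norm, hy']
        have : y + θ • (y - pr i w) - y = θ • (y - pr i w) := by abel
        rw [this, norm_smul, Real.norm_eq_abs, abs_of_pos hθ0, hθ]
        rw [div_mul_eq_mul_div]
        rw [div_lt_iff₀ (by positivity)]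
        nlinarith
      obtain ⟨x'', hx''K, hx''⟩ := hy'Y
      set a : ℝ := 1 / (1 + θ) with hA
      set b : ℝ := θ / (1 + θ) with hB
      have ha0 : 0 < a := by positivity
      have hb0 : 0 < b := by positivity
      have hab : b + a = 1 := by rw [hA, hB]; field_simp; ring
      refine ⟨b • w + a • x'', ?_, ?_⟩
      · exact hconv.combo_interior_self_mem_interior hw hx''K hb0 ha0.le hab
      · have hpr : pr i (b • w + a • x'') = b • pr i w + a • y' := by
          rw [(pr_linear i).map_add, (pr_linear i).map_smul, (pr_linear i).map_smul, hx'']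
        rw [hpr, hy']
        have : b • pr i w + a • (y + θ • (y - pr i w)) =
            (b - a * θ) • pr i w + (a + a * θ) • y := by
          rw [smul_sub, smul_add]
          module
        rw [this]
        have h1 : b - a * θ = 0 := by rw [hA, hB]; field_simp; ring
        have h2 : a + a * θ = 1 := by rw [hA]; field_simp
        rw [h1, h2, zero_smul, one_smul, zero_add]
  obtain ⟨hx'int, hx'pr⟩ := hx'
  obtain ⟨ρ, hρ0, hρK⟩ : ∃ ρ > 0, Metric.ball x' ρ ⊆ K := by
    rw [mem_interior_iff_mem_nhds, Metric.mem_nhds_iff] at hx'int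
    exact hx'int
  refine ⟨x' i - ρ / 2, ?_, ?_⟩
  · have hup : phi i y (x' i + ρ / 2) ∈ K := by
      apply hρK
      rw [Metric.mem_ball, dist_eq_norm]
      have heq : phi i y (x' i + ρ / 2) - x' = phi i (y - pr i x') (x' i + ρ / 2 - x' i) := by
        conv_lhs => rw [← phi_pr i x' , ← phi_sub, phi_pr]
      rw [heq, hx'pr, sub_self]
      have h4 : x' i + ρ / 2 - x' i = ρ / 2 := by ring
      rw [h4]
      have h5 := norm_phi_le i (0 : Euc m) (ρ / 2)
      rw [norm_zero, zero_add, abs_of_pos (by linarith : (0:ℝ) < ρ/2)] at h5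
      linarith
    have := le_gfn i hK hup
    linarith
  · apply hρK
    rw [Metric.mem_ball, dist_eq_norm]
    have heq : phi i y (x' i - ρ / 2) - x' = phi i (y - pr i x') (x' i - ρ / 2 - x' i) := by
      conv_lhs => rw [← phi_pr i x' , ← phi_sub, phi_pr]
    rw [heq, hx'pr, sub_self]
    have h4 : x' i - ρ / 2 - x' i = -(ρ / 2) := by ring
    rw [h4]
    have h5 := norm_phi_le i (0 : Euc m) (-(ρ / 2))
    rw [norm_zero, zero_add, abs_neg, abs_of_pos (by linarith : (0:ℝ) < ρ/2)] at h5
    linarith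

end Chart


-- ==================== Hausdorff measure vs volume ====================

lemma hausdorff_null_of_volume_null {m : ℕ} {N : Set (Euc m)} (h : volume N = 0) :
    μH[(m:ℝ)] N = 0 := by
  obtain ⟨N', hNN', hN'meas, hN'vol⟩ := exists_measurable_superset_of_null h
  set E := WithLp.equiv 2 (Fin m → ℝ) with hE
  have hpi : (μH[(m:ℝ)] : Measure (Fin m → ℝ)) = volume := by
    simpa using MeasureTheory.hausdorffMeasure_pi_real (ι := Fin m)
  have hvol' : (volume : Measure (Fin m → ℝ)) (⇑E '' N') = 0 := by
    rw [Equiv.image_eq_preimage_symm]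
    rw [show ⇑E.symm = WithLp.toLp 2 from rfl, (PiLp.volume_preserving_toLp (Fin m)).measure_preimage
      hN'meas.nullMeasurableSet]
    exact hN'vol
  have hH' : μH[(m:ℝ)] (⇑E '' N') = 0 := by rw [hpi]; exact hvol'
  have hlip : LipschitzWith ((Fintype.card (Fin m) : ℝ≥0) ^ ((1:ℝ≥0∞)/2).toReal) ⇑E.symm :=
    (PiLp.antilipschitzWith_ofLp 2 (fun _ : Fin m => ℝ)).to_rightInverse
      (WithLp.ofLp_toLp 2)
  have himg := hlip.hausdorffMeasure_image_le
    (by positivity : (0:ℝ) ≤ (m:ℝ)) (⇑E '' N')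
  rw [hH', mul_zero] at himg
  have hback : ⇑E.symm '' (⇑E '' N') = N' := Equiv.symm_image_image E N'
  rw [hback] at himg
  exact measure_mono_null hNN' (le_antisymm himg zero_le)

-- ==================== differentiability gives unique normals ====================

section Chart2

variable {m : ℕ} (i : Fin (m + 1)) {K : Set (Euc (m+1))}

lemma normal_struct (hconv : Convex ℝ K) (hK : IsCompact K)
    (hint : (interior K).Nonempty) {y : Euc m} (hy : y ∈ interior (pr i '' K))
    (hd : DifferentiableAt ℝ (gfn i K) y) {v : Euc (m+1)} (hv : ‖v‖ = 1)
    (hnv : (inner ℝ (phi i y (gfn i K y)) v : ℝ) = suppFn K v) :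
    0 < v i ∧ ∀ e : Euc m, (inner ℝ e (pr i v) : ℝ) = -(fderiv ℝ (gfn i K) y e * v i) := by
  have hyY : y ∈ pr i '' K := interior_subset hy
  have hxK : phi i y (gfn i K y) ∈ K := gfn_mem i hK hyY
  have hkey : ∀ e : Euc m, (inner ℝ e (pr i v) : ℝ) + fderiv ℝ (gfn i K) y e * v i = 0 := by
    intro e
    set q : ℝ → ℝ := fun t =>
      (inner ℝ e (pr i v) : ℝ) * t + (gfn i K (y + t • e) - gfn i K y) * v i with hq
    have hq0 : q 0 = 0 := by simp [hq]
    have hcont : Continuous fun t : ℝ => y + t • e :=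
      continuous_const.add (continuous_id.smul continuous_const)
    have hev : ∀ᶠ t in 𝓝 (0:ℝ), y + t • e ∈ interior (pr i '' K) := by
      have h0 : y + (0:ℝ) • e = y := by simp
      apply (hcont.continuousAt (x := (0:ℝ))).eventually_mem
      rw [h0]
      exact isOpen_interior.mem_nhds hy
    have hqneg : ∀ᶠ t in 𝓝 (0:ℝ), q t ≤ q 0 := by
      filter_upwards [hev] with t ht
      rw [hq0]
      have hzK : phi i (y + t • e) (gfn i K (y + t • e)) ∈ K :=
        gfn_mem i hK (interior_subset ht)
      have hle : (inner ℝ (phi i (y + t • e) (gfn i K (y + t • e))) v : ℝ) ≤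
          (inner ℝ (phi i y (gfn i K y)) v : ℝ) := by
        rw [hnv]; exact inner_le_suppFn hK hzK v
      have hdiff : phi i (y + t • e) (gfn i K (y + t • e)) - phi i y (gfn i K y) =
          phi i (t • e) (gfn i K (y + t • e) - gfn i K y) := by
        have hyy : y + t • e - y = t • e := by abel
        rw [← phi_sub, hyy]
      have h2 : (inner ℝ (phi i (t • e) (gfn i K (y + t • e) - gfn i K y)) v : ℝ) ≤ 0 := by
        rw [← hdiff, inner_sub_left]; linarith
      rw [inner_phi, real_inner_smul_left] at h2
      show (inner ℝ e (pr i v) : ℝ) * t + (gfn i K (y + t • e) - gfn i K y) * v i ≤ 0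
      nlinarith [h2]
    have hline : HasDerivAt (fun t : ℝ => y + t • e) e 0 := by
      simpa using ((hasDerivAt_id (0:ℝ)).smul_const e).const_add y
    have hcomp : HasDerivAt (fun t : ℝ => gfn i K (y + t • e)) (fderiv ℝ (gfn i K) y e) 0 := by
      have h0 : y + (0:ℝ) • e = y := by simp
      have hfd : HasFDerivAt (gfn i K) (fderiv ℝ (gfn i K) y) ((fun t : ℝ => y + t • e) 0) := by
        simpa [h0] using hd.hasFDerivAt
      exact hfd.comp_hasDerivAt 0 hline
    have hqd : HasDerivAt q ((inner ℝ e (pr i v) : ℝ) + fderiv ℝ (gfn i K) y e * v i) 0 := by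
      have h1 : HasDerivAt (fun t : ℝ => (inner ℝ e (pr i v) : ℝ) * t)
          (inner ℝ e (pr i v) : ℝ) 0 := by
        simpa using (hasDerivAt_id (0:ℝ)).const_mul (inner ℝ e (pr i v) : ℝ)
      have h2 : HasDerivAt (fun t : ℝ => (gfn i K (y + t • e) - gfn i K y) * v i)
          (fderiv ℝ (gfn i K) y e * v i) 0 :=
        (hcomp.sub_const (gfn i K y)).mul_const (v i)
      exact h1.add h2
    have hmax : IsLocalMax q 0 := hqneg
    have := hmax.hasDerivAt_eq_zero hqd
    linarith [this]
  have hge : 0 ≤ v i := by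
    obtain ⟨s₀, hs₀lt, hs₀K⟩ := interior_below i hconv hK hint hy
    have hle : (inner ℝ (phi i y s₀) v : ℝ) ≤ (inner ℝ (phi i y (gfn i K y)) v : ℝ) := by
      rw [hnv]; exact inner_le_suppFn hK hs₀K v
    have hdec : (inner ℝ (phi i y s₀) v : ℝ) - (inner ℝ (phi i y (gfn i K y)) v : ℝ) =
        (s₀ - gfn i K y) * v i := by
      rw [inner_phi, inner_phi]; ring
    nlinarith
  have hipos : 0 < v i := by
    rcases lt_or_eq_of_le hge with h | h
    · exact h
    · exfalso
      have hpr0 : pr i v = 0 := by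
        apply ext_inner_left ℝ
        intro e
        rw [inner_zero_right]
        have := hkey e
        rw [← h] at this
        linarith
      have hv0 : v = 0 := by
        have hrec := phi_pr i v
        rw [hpr0, ← h] at hrec
        rw [← hrec]
        ext j
        rcases eq_or_ne j i with rfl | hj
        · simp [phi]
        · obtain ⟨k, rfl⟩ := Fin.exists_succAbove_eq hj
          simp [phi, Fin.insertNth_apply_succAbove]
      rw [hv0] at hv
      simp at hv
  refine ⟨hipos, fun e => ?_⟩
  have := hkey e
  linarith

lemma smooth_of_diff (hconv : Convex ℝ K) (hK : IsCompact K)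
    (hint : (interior K).Nonempty) {y : Euc m} (hy : y ∈ interior (pr i '' K))
    (hd : DifferentiableAt ℝ (gfn i K) y) : SmoothPt K (phi i y (gfn i K y)) := by
  refine ⟨gfn_mem i hK (interior_subset hy), fun v w hv hw hnv hnw => ?_⟩
  obtain ⟨hvi, hve⟩ := normal_struct i hconv hK hint hy hd hv hnv
  obtain ⟨hwi, hwe⟩ := normal_struct i hconv hK hint hy hd hw hnw
  have hpr : (w i) • pr i v = (v i) • pr i w := by
    apply ext_inner_left ℝ
    intro e
    rw [real_inner_smul_right, real_inner_smul_right, hve e, hwe e]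
    ring
  have hvw : (w i) • v = (v i) • w := by
    have h1 : (w i) • v = phi i ((w i) • pr i v) (w i * v i) := by
      rw [phi_smul, phi_pr]
    have h2 : (v i) • w = phi i ((v i) • pr i w) (v i * w i) := by
      rw [phi_smul, phi_pr]
    rw [h1, h2, hpr, mul_comm]
  have hnorm : w i = v i := by
    have hcn := congrArg norm hvw
    rw [norm_smul, norm_smul, hv, hw, mul_one, mul_one, Real.norm_eq_abs, Real.norm_eq_abs,
      abs_of_pos hwi, abs_of_pos hvi] at hcn
    exact hcn
  rw [hnorm] at hvw
  exact smul_right_injective _ (ne_of_gt hvi) hvw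

-- ==================== a.e. differentiability of the upper graph fn ====================

lemma ae_diff_gfn (hconv : Convex ℝ K) (hK : IsCompact K) :
    volume {y : Euc m | y ∈ interior (pr i '' K) ∧ ¬ DifferentiableAt ℝ (gfn i K) y} = 0 := by
  set g := gfn i K with hgdef
  set s := {y : Euc m | y ∈ interior (pr i '' K) ∧ ¬ DifferentiableAt ℝ g y} with hs
  apply measure_null_of_locally_null
  intro y hy
  obtain ⟨C, t, ht, hlip⟩ := (gfn_concave i hconv hK).locallyLipschitzOn_interior hy.1
  rw [isOpen_interior.nhdsWithin_eq hy.1] at ht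
  obtain ⟨ε, hε0, hball⟩ := Metric.mem_nhds_iff.1 ht
  refine ⟨s ∩ Metric.ball y ε, inter_mem_nhdsWithin s (Metric.ball_mem_nhds y hε0), ?_⟩
  have hlipball : LipschitzOnWith C g (Metric.ball y ε) := hlip.mono hball
  have hrad := hlipball.ae_differentiableWithinAt (μ := volume) measurableSet_ball
  have hae : ∀ᵐ z ∂(volume.restrict (Metric.ball y ε)), DifferentiableAt ℝ g z := by
    filter_upwards [hrad, ae_restrict_mem measurableSet_ball] with z hz hzball
    exact hz.differentiableAt (Metric.isOpen_ball.mem_nhds hzball)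
  have h0 : volume.restrict (Metric.ball y ε) {z | ¬ DifferentiableAt ℝ g z} = 0 :=
    ae_iff.1 hae
  rw [Measure.restrict_apply' measurableSet_ball] at h0
  apply measure_mono_null _ h0
  rintro z ⟨hzs, hzball⟩
  exact ⟨hzs.2, hzball⟩

-- ==================== the chart set G and its properties ====================

lemma continuous_apply_euc : Continuous (fun x : Euc (m+1) => x i) := by
  refine (LipschitzWith.of_dist_le_mul (K := 1) fun x x' => ?_).continuous
  rw [Real.dist_eq, dist_eq_norm, NNReal.coe_one, one_mul]
  exact abs_apply_le i (x - x')

def Gset (i : Fin (m + 1)) (K : Set (Euc (m+1))) (c : ℝ) : Set (Euc (m+1)) :=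
  {x | x ∈ frontier K ∧ ∃ v : Euc (m+1), ‖v‖ = 1 ∧ c ≤ v i ∧
    (inner ℝ x v : ℝ) = suppFn K v}

lemma Gset_compact (hK : IsCompact K) (hne : K.Nonempty) (c : ℝ) :
    IsCompact (Gset i K c) := by
  set S : Set (Euc (m+1) × Euc (m+1)) :=
    {p | p.1 ∈ frontier K ∧ (‖p.2‖ = 1 ∧ (c ≤ p.2 i ∧
      (inner ℝ p.1 p.2 : ℝ) = suppFn K p.2))} with hS
  have hfr : IsCompact (frontier K) :=
    IsCompact.of_isClosed_subset hK isClosed_frontier hK.isClosed.frontier_subset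
  have hSclosed : IsClosed S := by
    refine IsClosed.inter (isClosed_frontier.preimage continuous_fst) ?_
    refine IsClosed.inter (isClosed_eq (continuous_norm.comp continuous_snd)
      continuous_const) ?_
    refine IsClosed.inter (isClosed_le continuous_const
      ((continuous_apply_euc i).comp continuous_snd)) ?_
    exact isClosed_eq continuous_inner ((continuous_suppFn hK hne).comp continuous_snd)
  have hScomp : IsCompact S := by
    refine IsCompact.of_isClosed_subset (hfr.prod (isCompact_sphere (0 : Euc (m+1)) 1))
      hSclosed ?_
    rintro ⟨x, v⟩ ⟨h1, h2, _, _⟩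
    exact ⟨h1, by rwa [mem_sphere_zero_iff_norm]⟩
  have himg : Gset i K c = Prod.fst '' S := by
    ext x
    constructor
    · rintro ⟨hxf, v, hv1, hvc, hvn⟩
      exact ⟨(x, v), ⟨hxf, hv1, hvc, hvn⟩, rfl⟩
    · rintro ⟨⟨x', v⟩, ⟨hxf, hv1, hvc, hvn⟩, rfl⟩
      exact ⟨hxf, v, hv1, hvc, hvn⟩
  rw [himg]
  exact hScomp.image continuous_fst

lemma gfn_lipschitzOn (hK : IsCompact K) {c : ℝ} (hc : 0 < c) :
    LipschitzOnWith (Real.toNNReal c⁻¹) (gfn i K) (pr i '' Gset i K c) := by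
  rw [lipschitzOnWith_iff_dist_le_mul]
  rintro _ ⟨x, hxG, rfl⟩ _ ⟨x', hx'G, rfl⟩
  obtain ⟨hxf, v, hv1, hvc, hvn⟩ := hxG
  obtain ⟨hx'f, v', hv'1, hv'c, hv'n⟩ := hx'G
  have hxK : x ∈ K := hK.isClosed.frontier_subset hxf
  have hx'K : x' ∈ K := hK.isClosed.frontier_subset hx'f
  have hgx : gfn i K (pr i x) = x i := (top_char i hK hxK (lt_of_lt_of_le hc hvc) hvn).symm
  have hgx' : gfn i K (pr i x') = x' i := (top_char i hK hx'K (lt_of_lt_of_le hc hv'c) hv'n).symm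
  have key : ∀ z z' w : Euc (m+1), z ∈ K → z' ∈ K → ‖w‖ = 1 → c ≤ w i →
      (inner ℝ z w : ℝ) = suppFn K w → z' i - z i ≤ c⁻¹ * ‖pr i z' - pr i z‖ := by
    intro z z' w hz hz' hw1 hwc hwn
    have h1 : (inner ℝ (z' - z) w : ℝ) ≤ 0 := by
      rw [inner_sub_left, hwn]
      have := inner_le_suppFn hK hz' w
      linarith
    have hdec : z' - z = phi i (pr i z' - pr i z) (z' i - z i) := by
      rw [phi_sub, phi_pr, phi_pr]
    rw [hdec, inner_phi] at h1
    have h2 : -(inner ℝ (pr i z' - pr i z) (pr i w) : ℝ) ≤ ‖pr i z' - pr i z‖ := by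
      have ha := abs_real_inner_le_norm (pr i z' - pr i z) (pr i w)
      have hwle : ‖pr i w‖ ≤ 1 := by rw [← hw1]; exact norm_pr_le i w
      have hb : |(inner ℝ (pr i z' - pr i z) (pr i w) : ℝ)| ≤ ‖pr i z' - pr i z‖ :=
        le_trans ha (mul_le_of_le_one_right (norm_nonneg _) hwle)
      linarith [(abs_le.1 hb).1]
    rcases le_or_gt (z' i - z i) 0 with hneg | hpos
    · have : (0:ℝ) ≤ c⁻¹ * ‖pr i z' - pr i z‖ := by positivity
      linarith
    · have h3 : (z' i - z i) * c ≤ (z' i - z i) * w i := mul_le_mul_of_nonneg_left hwc hpos.le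
      have h4 : (z' i - z i) * w i ≤ ‖pr i z' - pr i z‖ := by linarith
      rw [inv_mul_eq_div, le_div_iff₀ hc]
      linarith
  have h5 := key x x' v hxK hx'K hv1 hvc hvn
  have h6 := key x' x v' hx'K hxK hv'1 hv'c hv'n
  rw [Real.dist_eq, hgx, hgx', Real.coe_toNNReal _ (by positivity), dist_eq_norm]
  have hrev : ‖pr i x - pr i x'‖ = ‖pr i x' - pr i x‖ := norm_sub_rev _ _
  rw [abs_le]
  constructor
  · rw [hrev]; linarith
  · linarith [h6]

lemma mem_Gset_eq_top (hK : IsCompact K) {c : ℝ} (hc : 0 < c) {x : Euc (m+1)}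
    (hx : x ∈ Gset i K c) : x = phi i (pr i x) (gfn i K (pr i x)) := by
  obtain ⟨hxf, v, hv1, hvc, hvn⟩ := hx
  exact top_eq i hK (hK.isClosed.frontier_subset hxf) (lt_of_lt_of_le hc hvc) hvn

end Chart2

-- ==================== inner ℝ approximation by compacts ====================

lemma inner_approx {m : ℕ} {A : Set (Euc m)} (hA : MeasurableSet A) (hfin : volume A ≠ ⊤) :
    ∃ Q : ℕ → Set (Euc m), (∀ k, IsCompact (Q k)) ∧ (∀ k, Q k ⊆ A) ∧
      volume (A \ ⋃ k, Q k) = 0 := by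
  have h : ∀ k : ℕ, ∃ Q, Q ⊆ A ∧ IsCompact Q ∧ volume (A \ Q) < ((k : ℝ≥0∞) + 1)⁻¹ := by
    intro k
    refine hA.exists_isCompact_diff_lt hfin ?_
    exact ENNReal.inv_ne_zero.2 (by simp)
  choose Q hQA hQc hQlt using h
  refine ⟨Q, hQc, hQA, ?_⟩
  by_contra h0
  obtain ⟨k, hk⟩ := ENNReal.exists_inv_nat_lt h0
  have hle : volume (A \ ⋃ j, Q j) ≤ volume (A \ Q k) :=
    measure_mono (diff_subset_diff_right (subset_iUnion Q k))
  have hmono : ((k : ℝ≥0∞) + 1)⁻¹ ≤ ((k : ℝ≥0∞))⁻¹ := ENNReal.inv_le_inv' le_self_add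
  have hcontra : volume (A \ ⋃ j, Q j) < ((k : ℝ≥0∞))⁻¹ :=
    lt_of_le_of_lt hle (lt_of_lt_of_le (hQlt k) hmono)
  exact lt_irrefl _ (hk.trans hcontra)


-- ==================== chart covering lemma ====================

lemma chart_plus {m : ℕ} (i : Fin (m + 1)) {K : Set (Euc (m+1))}
    (hconv : Convex ℝ K) (hK : IsCompact K) (hint : (interior K).Nonempty)
    {c : ℝ} (hc : 0 < c) :
    ∃ C : ℕ → Set (Euc (m+1)), (∀ k, IsCompact (C k)) ∧ (∀ k, ∀ x ∈ C k, SmoothPt K x) ∧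
      μH[(m:ℝ)] (Gset i K c \ ⋃ k, C k) = 0 := by
  classical
  have hne : K.Nonempty := hint.mono interior_subset
  obtain ⟨Gt, hGtLip, hGtEq⟩ := (gfn_lipschitzOn i hK hc).extend_real
  set Γ : Euc m → Euc (m+1) := fun y => phi i y (Gt y) with hΓ
  have hΓLip : LipschitzWith (Real.toNNReal c⁻¹ + 1) Γ := by
    apply LipschitzWith.of_dist_le_mul
    intro y y'
    rw [dist_eq_norm, dist_eq_norm]
    have hdec : Γ y - Γ y' = phi i (y - y') (Gt y - Gt y') := by
      rw [hΓ, phi_sub]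
    rw [hdec]
    have h1 : ‖phi i (y - y') (Gt y - Gt y')‖ ≤ ‖y - y'‖ + |Gt y - Gt y'| :=
      norm_phi_le i _ _
    have h2 : |Gt y - Gt y'| ≤ (Real.toNNReal c⁻¹ : ℝ) * ‖y - y'‖ := by
      have := hGtLip.dist_le_mul y y'
      rwa [Real.dist_eq, dist_eq_norm] at this
    have h3 : ((Real.toNNReal c⁻¹ + 1 : ℝ≥0) : ℝ) = (Real.toNNReal c⁻¹ : ℝ) + 1 := by
      push_cast; ring
    rw [h3]
    have h4 : ((Real.toNNReal c⁻¹ : ℝ) + 1) * ‖y - y'‖ =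
        ‖y - y'‖ + (Real.toNNReal c⁻¹ : ℝ) * ‖y - y'‖ := by ring
    rw [h4]
    linarith
  have hmemG : ∀ x ∈ Gset i K c, x = Γ (pr i x) := by
    intro x hx
    have h1 : x = phi i (pr i x) (gfn i K (pr i x)) := mem_Gset_eq_top i hK hc hx
    have h2 : pr i x ∈ pr i '' Gset i K c := ⟨x, hx, rfl⟩
    have h3 : Gt (pr i x) = gfn i K (pr i x) := (hGtEq h2).symm
    rw [hΓ]
    simpa [h3] using h1
  set D : Set (Euc m) :=
    ({y | y ∈ interior (pr i '' K)} ∩ {y | DifferentiableAt ℝ (gfn i K) y}) ∩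
      pr i '' Gset i K c with hD
  have hDmeas : MeasurableSet D := by
    refine MeasurableSet.inter (MeasurableSet.inter isOpen_interior.measurableSet ?_) ?_
    · exact measurableSet_of_differentiableAt ℝ (gfn i K)
    · exact ((Gset_compact i hK hne c).image (continuous_pr i)).measurableSet
  have hDfin : volume D ≠ ⊤ := by
    refine ne_of_lt (lt_of_le_of_lt (measure_mono ?_) (Y_compact i hK).measure_lt_top)
    intro y hy
    exact interior_subset hy.1.1
  obtain ⟨Q, hQcomp, hQsub, hQnull⟩ := inner_approx hDmeas hDfin
  refine ⟨fun k => Γ '' Q k, fun k => (hQcomp k).image hΓLip.continuous, ?_, ?_⟩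
  · intro k x hx
    obtain ⟨y, hyQ, rfl⟩ := hx
    have hyD := hQsub k hyQ
    have hΓy : Γ y = phi i y (gfn i K y) := by
      rw [hΓ]
      simp only
      rw [← hGtEq hyD.2]
    rw [hΓy]
    exact smooth_of_diff i hconv hK hint hyD.1.1 hyD.1.2
  · have hsub : Gset i K c \ (⋃ k, Γ '' Q k) ⊆
        Γ '' ((pr i '' Gset i K c) \ ⋃ k, Q k) := by
      rintro x ⟨hxG, hxn⟩
      refine ⟨pr i x, ⟨⟨x, hxG, rfl⟩, ?_⟩, (hmemG x hxG).symm⟩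
      intro hmem
      obtain ⟨k, hk⟩ := mem_iUnion.1 hmem
      exact hxn (mem_iUnion.2 ⟨k, ⟨pr i x, hk, (hmemG x hxG).symm⟩⟩)
    apply measure_mono_null hsub
    have hbase : volume ((pr i '' Gset i K c) \ ⋃ k, Q k) = 0 := by
      have hsplit : (pr i '' Gset i K c) \ ⋃ k, Q k ⊆
          ((pr i '' K \ interior (pr i '' K)) ∪
            {y | y ∈ interior (pr i '' K) ∧ ¬ DifferentiableAt ℝ (gfn i K) y}) ∪
            (D \ ⋃ k, Q k) := by
        intro y hy
        by_cases hyD : y ∈ D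
        · exact Or.inr ⟨hyD, hy.2⟩
        · left
          have hyY : y ∈ pr i '' K := by
            obtain ⟨x, hxG, rfl⟩ := hy.1
            exact ⟨x, hK.isClosed.frontier_subset hxG.1, rfl⟩
          by_cases hint' : y ∈ interior (pr i '' K)
          · right
            refine ⟨hint', fun hdiff => hyD ⟨⟨hint', hdiff⟩, hy.1⟩⟩
          · exact Or.inl ⟨hyY, hint'⟩
      apply measure_mono_null hsplit
      refine measure_union_null (measure_union_null ?_ ?_) hQnull
      · have hfr : pr i '' K \ interior (pr i '' K) = frontier (pr i '' K) := by
          rw [(Y_compact i hK).isClosed.frontier_eq]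
        rw [hfr]
        exact (Y_convex i hconv).addHaar_frontier volume
      · exact ae_diff_gfn i hconv hK
    have hH := hausdorff_null_of_volume_null hbase
    have himg := hΓLip.hausdorffMeasure_image_le
      (by positivity : (0:ℝ) ≤ (m:ℝ)) ((pr i '' Gset i K c) \ ⋃ k, Q k)
    rw [hH, mul_zero] at himg
    exact le_antisymm himg zero_le


-- ==================== reflection ====================

section Refl

variable {m : ℕ} (i : Fin (m + 1))

def reflc (i : Fin (m + 1)) (x : Euc (m+1)) : Euc (m+1) :=
  WithLp.toLp 2 (fun j => if j = i then -(x j) else x j : Fin (m+1) → ℝ)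

lemma reflc_invol (x : Euc (m+1)) : reflc i (reflc i x) = x := by
  ext j
  by_cases h : j = i <;> simp [reflc, h]

lemma reflc_apply (x : Euc (m+1)) (j : Fin (m+1)) :
    reflc i x j = if j = i then -(x j) else x j := rfl

lemma reflc_sub (x y : Euc (m+1)) : reflc i (x - y) = reflc i x - reflc i y := by
  ext j
  rw [PiLp.sub_apply]
  by_cases h : j = i <;> simp [reflc_apply, h, PiLp.sub_apply] <;> ring

lemma inner_reflc (x y : Euc (m+1)) : (inner ℝ (reflc i x) (reflc i y) : ℝ) = (inner ℝ x y : ℝ) := by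
  simp only [PiLp.inner_apply, RCLike.inner_apply, conj_trivial]
  apply Finset.sum_congr rfl
  intro j _
  by_cases h : j = i <;> simp [reflc, h] <;> ring

lemma inner_reflc_left (x y : Euc (m+1)) :
    (inner ℝ (reflc i x) y : ℝ) = (inner ℝ x (reflc i y) : ℝ) := by
  conv_lhs => rw [← reflc_invol i y]
  rw [inner_reflc]

lemma norm_reflc (x : Euc (m+1)) : ‖reflc i x‖ = ‖x‖ := by
  have h1 : ‖reflc i x‖ ^ 2 = ‖x‖ ^ 2 := by
    rw [← real_inner_self_eq_norm_sq, ← real_inner_self_eq_norm_sq, inner_reflc]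
  have := congrArg Real.sqrt h1
  rwa [Real.sqrt_sq (norm_nonneg _), Real.sqrt_sq (norm_nonneg _)] at this

lemma isometry_reflc : Isometry (reflc i) := by
  apply Isometry.of_dist_eq
  intro x y
  rw [dist_eq_norm, dist_eq_norm, ← reflc_sub, norm_reflc]

def reflcHomeo (i : Fin (m + 1)) : Euc (m+1) ≃ₜ Euc (m+1) where
  toFun := reflc i
  invFun := reflc i
  left_inv := reflc_invol i
  right_inv := reflc_invol i
  continuous_toFun := (isometry_reflc i).continuous
  continuous_invFun := (isometry_reflc i).continuous

lemma reflc_linear : IsLinearMap ℝ (reflc i) := by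
  constructor
  · intro x y
    ext j
    rw [PiLp.add_apply]
    by_cases h : j = i <;> simp [reflc_apply, h, PiLp.add_apply] <;> ring
  · intro a x
    ext j
    rw [PiLp.smul_apply]
    by_cases h : j = i <;> simp [reflc_apply, h, PiLp.smul_apply]

lemma suppFn_reflc_image (K : Set (Euc (m+1))) (v : Euc (m+1)) :
    suppFn (reflc i '' K) v = suppFn K (reflc i v) := by
  unfold suppFn
  congr 1
  rw [Set.image_image]
  apply Set.image_congr
  intro x _
  rw [← inner_reflc_left]

lemma smoothPt_of_reflc {K : Set (Euc (m+1))} {x : Euc (m+1)}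
    (h : SmoothPt (reflc i '' K) (reflc i x)) : SmoothPt K x := by
  obtain ⟨hmem, huniq⟩ := h
  constructor
  · obtain ⟨x', hx'K, hx'⟩ := hmem
    have : x' = x := by
      have := congrArg (reflc i) hx'
      rwa [reflc_invol, reflc_invol] at this
    rwa [← this]
  · intro v w hv hw hnv hnw
    have h1 : (inner ℝ (reflc i x) (reflc i v) : ℝ) = suppFn (reflc i '' K) (reflc i v) := by
      rw [inner_reflc, suppFn_reflc_image, reflc_invol]
      exact hnv
    have h2 : (inner ℝ (reflc i x) (reflc i w) : ℝ) = suppFn (reflc i '' K) (reflc i w) := by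
      rw [inner_reflc, suppFn_reflc_image, reflc_invol]
      exact hnw
    have := huniq (reflc i v) (reflc i w) (by rw [norm_reflc]; exact hv)
      (by rw [norm_reflc]; exact hw) h1 h2
    have := congrArg (reflc i) this
    rwa [reflc_invol, reflc_invol] at this

lemma reflc_body {K : Set (Euc (m+1))} (hconv : Convex ℝ K) (hK : IsCompact K)
    (hint : (interior K).Nonempty) :
    Convex ℝ (reflc i '' K) ∧ IsCompact (reflc i '' K) ∧
      (interior (reflc i '' K)).Nonempty := by
  refine ⟨hconv.is_linear_image (reflc_linear i), hK.image (isometry_reflc i).continuous, ?_⟩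
  have himg : reflc i '' K = reflcHomeo i '' K := rfl
  rw [himg, ← (reflcHomeo i).image_interior]
  exact hint.image _

lemma mem_Gset_reflc {K : Set (Euc (m+1))} {c : ℝ} {x : Euc (m+1)} {v : Euc (m+1)}
    (hxf : x ∈ frontier K) (hv : ‖v‖ = 1) (hvc : c ≤ -(v i))
    (hvn : (inner ℝ x v : ℝ) = suppFn K v) :
    reflc i x ∈ Gset i (reflc i '' K) c := by
  constructor
  · have himg : reflc i '' K = reflcHomeo i '' K := rfl
    rw [himg, ← (reflcHomeo i).image_frontier]
    exact ⟨x, hxf, rfl⟩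
  · refine ⟨reflc i v, by rw [norm_reflc]; exact hv, ?_, ?_⟩
    · show c ≤ reflc i v i
      simp [reflc]
      exact hvc
    · rw [inner_reflc, suppFn_reflc_image, reflc_invol]
      exact hvn

end Refl

-- ==================== existence of normals, coordinates ====================

lemma exists_normal {n : ℕ} {K : Set (Euc n)} (hconv : Convex ℝ K) (hK : IsCompact K)
    (hint : (interior K).Nonempty) {x : Euc n} (hx : x ∈ frontier K) :
    ∃ v : Euc n, ‖v‖ = 1 ∧ (inner ℝ x v : ℝ) = suppFn K v := by
  have hxK : x ∈ K := hK.isClosed.frontier_subset hx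
  have hne : K.Nonempty := ⟨x, hxK⟩
  have hxint : x ∉ interior K := fun hc => hx.2 hc
  obtain ⟨f, hf⟩ := geometric_hahn_banach_open_point (hconv.interior) isOpen_interior hxint
  set z := (InnerProductSpace.toDual ℝ (Euc n)).symm f with hz
  have hfz : ∀ w, f w = (inner ℝ z w : ℝ) := by
    intro w
    have : f = InnerProductSpace.toDual ℝ (Euc n) z := by
      rw [hz, LinearIsometryEquiv.apply_symm_apply]
    rw [this]; rfl
  obtain ⟨w₀, hw₀⟩ := hint
  have hz0 : z ≠ 0 := by
    intro h0
    have h1 := hf w₀ hw₀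
    have h2 : f w₀ = 0 := by rw [hfz, h0, inner_zero_left]
    have h3 : f x = 0 := by rw [hfz, h0, inner_zero_left]
    rw [h2, h3] at h1
    exact lt_irrefl _ h1
  have hle : ∀ a ∈ K, f a ≤ f x := by
    intro a ha
    have hcomb : ∀ t : ℝ, t ∈ Set.Ioo (0:ℝ) 1 → f (t • w₀ + (1 - t) • a) < f x := by
      intro t ht
      exact hf _ (hconv.combo_interior_self_mem_interior hw₀ ha ht.1
        (by linarith [ht.2]) (by ring))
    have hcont : Continuous fun t : ℝ => f (t • w₀ + (1 - t) • a) := by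
      apply f.continuous.comp
      apply Continuous.add
      · exact (continuous_id.smul continuous_const)
      · exact ((continuous_const.sub continuous_id).smul continuous_const)
    have h0 : (fun t : ℝ => f (t • w₀ + (1 - t) • a)) 0 = f a := by simp
    have htend : Tendsto (fun t : ℝ => f (t • w₀ + (1 - t) • a)) (𝓝[>] 0) (𝓝 (f a)) := by
      rw [← h0]
      exact hcont.continuousAt.tendsto.mono_left nhdsWithin_le_nhds
    refine le_of_tendsto htend ?_
    filter_upwards [Ioo_mem_nhdsGT_of_mem (⟨le_refl (0:ℝ), one_pos⟩ : (0:ℝ) ∈ Set.Ico 0 1)]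
      with t ht
    exact (hcomb t ht).le
  have hznorm : 0 < ‖z‖ := norm_pos_iff.2 hz0
  refine ⟨‖z‖⁻¹ • z, ?_, ?_⟩
  · rw [norm_smul, norm_inv, norm_norm, inv_mul_cancel₀ hznorm.ne']
  · refine le_antisymm (inner_le_suppFn hK hxK _) ?_
    refine suppFn_le hne fun a ha => ?_
    have h1 : (inner ℝ a (‖z‖⁻¹ • z) : ℝ) = ‖z‖⁻¹ * f a := by
      rw [real_inner_smul_right, hfz, real_inner_comm]
    have h2 : (inner ℝ x (‖z‖⁻¹ • z) : ℝ) = ‖z‖⁻¹ * f x := by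
      rw [real_inner_smul_right, hfz, real_inner_comm]
    rw [h1, h2]
    exact mul_le_mul_of_nonneg_left (hle a ha) (by positivity)

lemma exists_coord {m : ℕ} {v : Euc (m+1)} (hv : ‖v‖ = 1) :
    ∃ j : Fin (m+1), ((m+1 : ℕ) : ℝ)⁻¹ ≤ |v j| := by
  by_contra hcon
  push_neg at hcon
  have h1 : (1:ℝ) = ∑ j, v j * v j := by
    have h := real_inner_self_eq_norm_sq v
    rw [hv] at h
    simp only [PiLp.inner_apply, RCLike.inner_apply, conj_trivial] at h
    rw [one_pow] at h
    exact h.symm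
  have h2 : ∀ j : Fin (m+1), v j * v j < ((m+1:ℕ):ℝ)⁻¹ * ((m+1:ℕ):ℝ)⁻¹ := by
    intro j
    have hj := hcon j
    nlinarith [abs_nonneg (v j), sq_abs (v j), neg_abs_le (v j), le_abs_self (v j)]
  have h3 : ∑ j, v j * v j < ((m+1:ℕ):ℝ) * (((m+1:ℕ):ℝ)⁻¹ * ((m+1:ℕ):ℝ)⁻¹) := by
    have hs := Finset.sum_lt_sum_of_nonempty (Finset.univ_nonempty (α := Fin (m+1)))
      (fun j _ => h2 j)
    rw [Finset.sum_const, Finset.card_univ] at hs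
    simpa using hs
  have h4 : ((m+1:ℕ):ℝ) * (((m+1:ℕ):ℝ)⁻¹ * ((m+1:ℕ):ℝ)⁻¹) = ((m+1:ℕ):ℝ)⁻¹ := by
    have : ((m+1:ℕ):ℝ) ≠ 0 := by positivity
    field_simp
  have h5 : ((m+1:ℕ):ℝ)⁻¹ ≤ 1 := by
    rw [inv_le_one₀ (by positivity)]
    exact_mod_cast Nat.one_le_iff_ne_zero.2 (Nat.succ_ne_zero m)
  rw [h4] at h3
  linarith

-- closedness of normal sets attached to a compact set of boundary points

lemma closed_normal_set {n : ℕ} {K : Set (Euc n)} (hK : IsCompact K) (hne : K.Nonempty)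
    {C : Set (Euc n)} (hC : IsCompact C) :
    IsClosed {u : Euc n | ‖u‖ = 1 ∧ ∃ x ∈ C, (inner ℝ x u : ℝ) = suppFn K u} := by
  set S : Set (Euc n × Euc n) :=
    {p | p.1 ∈ C ∧ (‖p.2‖ = 1 ∧ (inner ℝ p.1 p.2 : ℝ) = suppFn K p.2)} with hS
  have hSclosed : IsClosed S := by
    refine IsClosed.inter (hC.isClosed.preimage continuous_fst) ?_
    refine IsClosed.inter (isClosed_eq (continuous_norm.comp continuous_snd)
      continuous_const) ?_
    exact isClosed_eq continuous_inner ((continuous_suppFn hK hne).comp continuous_snd)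
  have hScomp : IsCompact S := by
    refine IsCompact.of_isClosed_subset (hC.prod (isCompact_sphere (0 : Euc n) 1))
      hSclosed ?_
    rintro ⟨x, v⟩ ⟨h1, h2, _⟩
    exact ⟨h1, by rwa [mem_sphere_zero_iff_norm]⟩
  have himg : {u : Euc n | ‖u‖ = 1 ∧ ∃ x ∈ C, (inner ℝ x u : ℝ) = suppFn K u} =
      Prod.snd '' S := by
    ext u
    constructor
    · rintro ⟨hu1, x, hxC, hxn⟩
      exact ⟨(x, u), ⟨hxC, hu1, hxn⟩, rfl⟩
    · rintro ⟨⟨x, u'⟩, ⟨hxC, hu1, hxn⟩, rfl⟩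
      exact ⟨hu1, x, hxC, hxn⟩
  rw [himg]
  exact (hScomp.image continuous_snd).isClosed

-- ==================== main covering of the boundary ====================

lemma main_cover {m : ℕ} {K : Set (Euc (m+1))} (hconv : Convex ℝ K) (hK : IsCompact K)
    (hint : (interior K).Nonempty) :
    ∃ C : (Fin (m+1) × Bool × ℕ) → Set (Euc (m+1)),
      (∀ p, IsCompact (C p)) ∧ (∀ p, ∀ x ∈ C p, SmoothPt K x) ∧
      μH[(m:ℝ)] (frontier K \ ⋃ p, C p) = 0 := by
  classical
  set c : ℝ := ((m+1:ℕ):ℝ)⁻¹ with hc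
  have hc0 : 0 < c := by rw [hc]; positivity
  have hplus := fun j : Fin (m+1) => chart_plus j hconv hK hint hc0
  choose Cp hCp1 hCp2 hCp3 using hplus
  have hminus := fun j : Fin (m+1) =>
    chart_plus j (reflc_body j hconv hK hint).1 (reflc_body j hconv hK hint).2.1
      (reflc_body j hconv hK hint).2.2 hc0
  choose Cm hCm1 hCm2 hCm3 using hminus
  refine ⟨fun p => if p.2.1 then Cp p.1 p.2.2 else reflc p.1 '' Cm p.1 p.2.2, ?_, ?_, ?_⟩
  · rintro ⟨j, b, k⟩
    by_cases hb : b
    · simp only [hb, if_true]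
      exact hCp1 j k
    · simp only [hb, if_false]
      exact (hCm1 j k).image (isometry_reflc j).continuous
  · rintro ⟨j, b, k⟩ x hx
    have hx' : x ∈ (if b = true then Cp j k else reflc j '' Cm j k) := hx
    by_cases hb : b
    · rw [if_pos hb] at hx'
      exact hCp2 j k x hx'
    · rw [if_neg hb] at hx'
      obtain ⟨z, hz, rfl⟩ := hx'
      apply smoothPt_of_reflc j
      rw [reflc_invol]
      exact hCm2 j k z hz
  · have hsub : frontier K \ (⋃ p : Fin (m+1) × Bool × ℕ,
        (if p.2.1 then Cp p.1 p.2.2 else reflc p.1 '' Cm p.1 p.2.2)) ⊆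
        ⋃ j : Fin (m+1), ((Gset j K c \ ⋃ k, Cp j k) ∪
          reflc j '' (Gset j (reflc j '' K) c \ ⋃ k, Cm j k)) := by
      rintro x ⟨hxf, hxn⟩
      obtain ⟨v, hv1, hvn⟩ := exists_normal hconv hK hint hxf
      obtain ⟨j, hj⟩ := exists_coord hv1
      rw [mem_iUnion]
      refine ⟨j, ?_⟩
      rcases abs_cases (v j) with ⟨heq, _⟩ | ⟨heq, _⟩
      · left
        refine ⟨⟨hxf, v, hv1, by rw [heq] at hj; exact hj, hvn⟩, ?_⟩
        intro hmem
        obtain ⟨k, hk⟩ := mem_iUnion.1 hmem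
        refine hxn (mem_iUnion.2 ⟨(j, true, k), ?_⟩)
        simpa using hk
      · right
        have hvc : c ≤ -(v j) := by rw [heq] at hj; exact hj
        refine ⟨reflc j x, ⟨mem_Gset_reflc j hxf hv1 hvc hvn, ?_⟩, reflc_invol j x⟩
        intro hmem
        obtain ⟨k, hk⟩ := mem_iUnion.1 hmem
        refine hxn (mem_iUnion.2 ⟨(j, false, k), ?_⟩)
        simp only [if_false]
        exact ⟨reflc j x, hk, reflc_invol j x⟩
    apply measure_mono_null hsub
    apply measure_iUnion_null
    intro j
    apply measure_union_null
    · exact hCp3 j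
    · rw [(isometry_reflc j).hausdorffMeasure_image (Or.inl (by positivity))]
      exact hCm3 j

end SWAux

/-- For `S_K`-almost every `u ∈ S^{n-1}`, the support function of the Wulff
perturbation `K_t(f) = W(h_K + tf)` is differentiable at `t = 0` with derivative `f(u)`. -/
theorem suppFn_wulff_perturbation_deriv_ae (n : ℕ) (K : Set (Euc n)) (hK : IsConvexBody K)
    (h0 : (0 : Euc n) ∈ interior K) (f : Euc n → ℝ) (hf : Continuous f)
    (a b : ℝ) (ha : a < 0) (hb : 0 < b)
    (hpos : ∀ t ∈ Set.Ioo a b, ∀ u : Euc n, ‖u‖ = 1 → 0 < suppFn K u + t * f u)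
    (μ : Measure (Euc n)) (hμ : ∀ Ω : Set (Euc n), MeasurableSet Ω → μ Ω = surfMeas K Ω) :
    ∀ᵐ u ∂μ,
      HasDerivAt (fun t => suppFn (wulff (fun v => suppFn K v + t * f v)) u) (f u) 0 := by
  obtain ⟨hconv, hKcomp, hint⟩ := hK
  rw [MeasureTheory.ae_iff]
  cases n with
  | zero =>
    haveI : Subsingleton (Euc 0) := ⟨fun x y => PiLp.ext fun j => j.elim0⟩
    have hKuniv : K = Set.univ := by
      apply Set.eq_univ_of_forall
      intro y
      obtain ⟨x0, hx0⟩ : K.Nonempty := hint.mono interior_subset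
      rwa [Subsingleton.elim y x0]
    have hμ0 : μ Set.univ = 0 := by
      rw [hμ Set.univ MeasurableSet.univ]
      unfold surfMeas
      have hempty : {x : Euc 0 | x ∈ frontier K ∧ ∃ u ∈ (Set.univ : Set (Euc 0)),
          ‖u‖ = 1 ∧ (inner ℝ x u : ℝ) = suppFn K u} = ∅ := by
        apply Set.eq_empty_of_forall_notMem
        intro x hx
        rw [hKuniv, frontier_univ] at hx
        exact hx.1
      rw [hempty]
      exact measure_empty
    exact measure_mono_null (Set.subset_univ _) hμ0
  | succ m =>
    obtain ⟨C, hC1, hC2, hC3⟩ := SWAux.main_cover hconv hKcomp hint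
    set Ωgood : Set (Euc (m+1)) :=
      ⋃ p, {u | ‖u‖ = 1 ∧ ∃ x ∈ C p, (inner ℝ x u : ℝ) = suppFn K u} with hΩ
    have hΩmeas : MeasurableSet Ωgood := by
      apply MeasurableSet.iUnion
      intro p
      exact (SWAux.closed_normal_set hKcomp (hint.mono interior_subset)
        (hC1 p)).measurableSet
    have hsurf : μ Ωgoodᶜ = 0 := by
      rw [hμ _ hΩmeas.compl]
      unfold surfMeas
      have hsub2 : {x : Euc (m+1) | x ∈ frontier K ∧ ∃ u ∈ Ωgoodᶜ, ‖u‖ = 1 ∧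
          (inner ℝ x u : ℝ) = suppFn K u} ⊆ frontier K \ ⋃ p, C p := by
        rintro x ⟨hxf, u, huΩ, hu1, hun⟩
        refine ⟨hxf, fun hxR => ?_⟩
        obtain ⟨p, hp⟩ := Set.mem_iUnion.1 hxR
        exact huΩ (Set.mem_iUnion.2 ⟨p, hu1, x, hp, hun⟩)
      apply measure_mono_null hsub2
      have hcast : ((m+1:ℕ):ℝ) - 1 = (m:ℝ) := by push_cast; ring
      rw [hcast]
      exact hC3
    apply measure_mono_null ?_ hsurf
    intro u hu
    simp only [Set.mem_setOf_eq] at hu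
    intro huΩ
    obtain ⟨p, hu1, x, hxC, hxn⟩ := Set.mem_iUnion.1 huΩ
    have hsm := hC2 p x hxC
    exact hu (SWAux.aleksandrov_pointwise hconv hKcomp h0 hf ha hb hpos hu1 hsm.1 hxn
      (fun v hv hvn => hsm.2 v u hv hu1 hvn hxn))


end
end

section
/- There exist a convex body K in ℝ² containing a point of S¹ as a boundary point (namely a triangle, e.g. a translate of conv{0,e_1,e_2} with the origin in its interior), a continuous function f:S¹→[0,1], and a point u ∈ S¹ such that the one-sided derivatives of t ↦ h_{K_t(f)}(u) at t=0 differ; in particular the derivative d/dt h_{K_t(f)}(u)|_{t=0} does not exist at u, so the S_K-almost everywhere differentiability in the previous theorem cannot be improved to everywhere differentiability. -/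
open scoped Pointwise NNReal ENNReal
open MeasureTheory Metric Set Filter

noncomputable section

namespace WulffAux

/-- Point of `ℝ²` with given coordinates. -/
def pt (r s : ℝ) : Euc 2 :=
  EuclideanSpace.single 0 r + EuclideanSpace.single 1 s

@[simp] lemma pt_apply_zero (r s : ℝ) : pt r s 0 = r := by
  simp [pt]

@[simp] lemma pt_apply_one (r s : ℝ) : pt r s 1 = s := by
  simp [pt]

lemma inner2 (x y : Euc 2) : (inner ℝ x y : ℝ) = x 0 * y 0 + x 1 * y 1 := by
  simp [PiLp.inner_apply, Fin.sum_univ_two, RCLike.inner_apply]; ring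

lemma abs_coord_le (y : Euc 2) (i : Fin 2) : |y i| ≤ ‖y‖ := by
  have h := abs_real_inner_le_norm y (EuclideanSpace.single i (1 : ℝ))
  rw [real_inner_comm] at h
  simpa [EuclideanSpace.inner_single_left] using h

lemma norm_pt (r s : ℝ) : ‖pt r s‖ = Real.sqrt (r ^ 2 + s ^ 2) := by
  simp [EuclideanSpace.norm_eq, Fin.sum_univ_two, Real.norm_eq_abs, sq_abs]

/-- The vertices of the triangle. -/
def A : Euc 2 := pt (-(1/4)) (-(1/4))
def B : Euc 2 := pt (3/4) (-(1/4))
def Cv : Euc 2 := pt (-(1/4)) (3/4)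

/-- The triangle. -/
def Kt : Set (Euc 2) :=
  (fun x => x + A) '' convexHull ℝ ({0, EuclideanSpace.single (0 : Fin 2) (1 : ℝ),
    EuclideanSpace.single (1 : Fin 2) (1 : ℝ)} : Set (Euc 2))

lemma Kt_eq : Kt = convexHull ℝ {A, B, Cv} := by
  have h1 : (fun x : Euc 2 => x + A) = fun x : Euc 2 => A +ᵥ x := by
    funext x; simp [add_comm]
  have h2 : (fun x : Euc 2 => A +ᵥ x) '' (convexHull ℝ ({0, EuclideanSpace.single (0 : Fin 2) (1 : ℝ),
      EuclideanSpace.single (1 : Fin 2) (1 : ℝ)} : Set (Euc 2)))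
      = convexHull ℝ ((fun x : Euc 2 => A +ᵥ x) '' {0, EuclideanSpace.single (0 : Fin 2) (1 : ℝ),
      EuclideanSpace.single (1 : Fin 2) (1 : ℝ)}) := by
    rw [Set.image_vadd, Set.image_vadd, convexHull_vadd]
  rw [Kt, h1, h2]
  congr 1
  rw [Set.image_insert_eq, Set.image_insert_eq, Set.image_singleton]
  have e0 : A +ᵥ (0 : Euc 2) = A := by simp
  have e1 : A +ᵥ EuclideanSpace.single (0 : Fin 2) (1 : ℝ) = B := by
    ext i; fin_cases i <;>
      simp [A, B, pt, vadd_eq_add] <;> norm_num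
  have e2 : A +ᵥ EuclideanSpace.single (1 : Fin 2) (1 : ℝ) = Cv := by
    ext i; fin_cases i <;>
      simp [A, Cv, pt, vadd_eq_add] <;> norm_num
  rw [e0, e1, e2]

lemma inner_le_of_mem_hull {x : Euc 2} (u : Euc 2)
    (hx : x ∈ convexHull ℝ ({A, B, Cv} : Set (Euc 2))) :
    (inner ℝ x u : ℝ) ≤ max (inner ℝ A u : ℝ) (max (inner ℝ B u : ℝ) (inner ℝ Cv u : ℝ)) := by
  set M : ℝ := max (inner ℝ A u : ℝ) (max (inner ℝ B u : ℝ) (inner ℝ Cv u : ℝ)) with hM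
  have hlin : IsLinearMap ℝ (fun y : Euc 2 => (inner ℝ y u : ℝ)) :=
    ⟨fun a b => inner_add_left a b u, fun c a => real_inner_smul_left a u c⟩
  have hconv : Convex ℝ {y : Euc 2 | (inner ℝ y u : ℝ) ≤ M} := convex_halfSpace_le hlin M
  have hsub : ({A, B, Cv} : Set (Euc 2)) ⊆ {y : Euc 2 | (inner ℝ y u : ℝ) ≤ M} := by
    rintro y (rfl | rfl | rfl)
    · show (inner ℝ A u : ℝ) ≤ M
      exact le_max_left _ _
    · show (inner ℝ B u : ℝ) ≤ M
      exact le_trans (le_max_left _ _) (le_max_right _ _)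
    · show (inner ℝ Cv u : ℝ) ≤ M
      exact le_trans (le_max_right _ _) (le_max_right _ _)
  exact convexHull_min hsub hconv hx

lemma suppFn_Kt (u : Euc 2) :
    suppFn Kt u = max (inner ℝ A u : ℝ) (max (inner ℝ B u : ℝ) (inner ℝ Cv u : ℝ)) := by
  rw [Kt_eq]
  apply IsGreatest.csSup_eq
  constructor
  · rcases max_choice (inner ℝ A u : ℝ) (max (inner ℝ B u : ℝ) (inner ℝ Cv u : ℝ)) with h1 | h1
    · exact ⟨A, subset_convexHull ℝ _ (by simp), h1.symm⟩
    · rcases max_choice (inner ℝ B u : ℝ) (inner ℝ Cv u : ℝ) with h2 | h2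
      · exact ⟨B, subset_convexHull ℝ _ (by simp), by rw [h1, h2]⟩
      · exact ⟨Cv, subset_convexHull ℝ _ (by simp), by rw [h1, h2]⟩
  · rintro y ⟨x, hx, rfl⟩
    exact inner_le_of_mem_hull u hx

lemma mem_Kt_iff {x : Euc 2} :
    x ∈ Kt ↔ -(1/4) ≤ x 0 ∧ -(1/4) ≤ x 1 ∧ x 0 + x 1 ≤ 1/2 := by
  rw [Kt_eq]
  constructor
  · intro hx
    have h1 := inner_le_of_mem_hull (pt (-1) 0) hx
    have h2 := inner_le_of_mem_hull (pt 0 (-1)) hx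
    have h3 := inner_le_of_mem_hull (pt 1 1) hx
    rw [inner2, inner2, inner2, inner2] at h1 h2 h3
    simp only [A, B, Cv, pt_apply_zero, pt_apply_one] at h1 h2 h3
    norm_num at h1 h2 h3
    exact ⟨by linarith, by linarith, by linarith⟩
  · rintro ⟨h0, h1, h2⟩
    have hA : A ∈ ({A, B, Cv} : Set (Euc 2)) := by simp
    have hB : B ∈ ({A, B, Cv} : Set (Euc 2)) := by simp
    have hC : Cv ∈ ({A, B, Cv} : Set (Euc 2)) := by simp
    have hmem := (convex_convexHull ℝ ({A, B, Cv} : Set (Euc 2))).sum_mem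
      (t := Finset.univ) (w := ![1/2 - x 0 - x 1, x 0 + 1/4, x 1 + 1/4])
      (z := ![A, B, Cv])
      (by intro i _; fin_cases i <;> simp <;> linarith)
      (by simp [Fin.sum_univ_three]; ring)
      (by intro i _; fin_cases i <;> simp [subset_convexHull ℝ _ hA,
        subset_convexHull ℝ _ hB, subset_convexHull ℝ _ hC])
    have hsum : (∑ i : Fin 3, (![1/2 - x 0 - x 1, x 0 + 1/4, x 1 + 1/4] : Fin 3 → ℝ) i •
        (![A, B, Cv] : Fin 3 → Euc 2) i) = x := by
      rw [Fin.sum_univ_three]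
      ext j
      fin_cases j <;>
        simp [A, B, Cv, pt] <;> ring
    rwa [hsum] at hmem

/-- The perturbing function. -/
def f0 : Euc 2 → ℝ := fun v => max 0 (4 * v 0 - 3)

lemma f0_cont : Continuous f0 := by
  have h : Continuous fun v : Euc 2 => v 0 :=
    (continuous_apply (0 : Fin 2)).comp (PiLp.continuous_ofLp 2 fun _ : Fin 2 => ℝ)
  exact continuous_const.max ((continuous_const.mul h).sub continuous_const)

lemma f0_nonneg (v : Euc 2) : 0 ≤ f0 v := le_max_left _ _

lemma f0_le_one {v : Euc 2} (hv : ‖v‖ = 1) : f0 v ≤ 1 := by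
  have h := abs_coord_le v 0
  rw [hv] at h
  have := abs_le.mp h
  exact max_le (by norm_num) (by linarith [this.2])

lemma sqrt2_lt : Real.sqrt 2 < 3/2 := by
  have h : (3:ℝ)/2 = Real.sqrt ((3/2)^2) := (Real.sqrt_sq (by norm_num)).symm
  rw [h]
  exact Real.sqrt_lt_sqrt (by norm_num) (by norm_num)

lemma sqrt2_pos : (0:ℝ) < Real.sqrt 2 := Real.sqrt_pos.mpr (by norm_num)

lemma sq_sqrt2 : Real.sqrt 2 ^ 2 = 2 := Real.sq_sqrt (by norm_num)

/-- For `t ≥ 0` the Wulff shape is unchanged. -/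
lemma wulff_eq_of_nonneg {t : ℝ} (ht : 0 ≤ t) :
    wulff (fun v => suppFn Kt v + t * f0 v) = Kt := by
  apply Set.Subset.antisymm
  · intro x hx
    simp only [wulff, Set.mem_setOf_eq] at hx
    set s2 : ℝ := Real.sqrt 2 with hs2def
    have hs2 : 0 < s2 := sqrt2_pos
    have hs2sq : s2 ^ 2 = 2 := sq_sqrt2
    have hs2lt : s2 < 3/2 := sqrt2_lt
    have hn1 : ‖pt (-1) 0‖ = 1 := by rw [norm_pt]; norm_num
    have hn2 : ‖pt 0 (-1)‖ = 1 := by rw [norm_pt]; norm_num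
    have hn3 : ‖pt (s2/2) (s2/2)‖ = 1 := by
      rw [norm_pt]
      have : (s2/2)^2 + (s2/2)^2 = 1 := by nlinarith
      rw [this, Real.sqrt_one]
    have h1 := hx _ hn1
    have h2 := hx _ hn2
    have h3 := hx _ hn3
    rw [suppFn_Kt, inner2] at h1 h2
    rw [inner2, inner2, inner2] at h1 h2
    simp only [A, B, Cv, pt_apply_zero, pt_apply_one, f0] at h1 h2
    norm_num at h1 h2
    -- the diagonal constraint, with `f0` vanishing there
    have hfn3 : f0 (pt (s2/2) (s2/2)) = 0 := by
      simp only [f0, pt_apply_zero]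
      exact max_eq_left (by nlinarith)
    have hsupp3 : suppFn Kt (pt (s2/2) (s2/2)) ≤ (1/2) * (s2/2) := by
      rw [suppFn_Kt, inner2, inner2, inner2]
      simp only [A, B, Cv, pt_apply_zero, pt_apply_one]
      refine max_le (by nlinarith) (max_le (le_of_eq (by ring)) (le_of_eq (by ring)))
    rw [inner2, hfn3, mul_zero, add_zero] at h3
    simp only [pt_apply_zero, pt_apply_one] at h3
    rw [mem_Kt_iff]
    refine ⟨by linarith, by linarith, ?_⟩
    have h3' : x 0 * (s2/2) + x 1 * (s2/2) ≤ (1/2) * (s2/2) := le_trans h3 hsupp3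
    nlinarith
  · intro x hx u hu
    show (inner ℝ x u : ℝ) ≤ suppFn Kt u + t * f0 u
    rw [suppFn_Kt]
    have h := inner_le_of_mem_hull u (Kt_eq ▸ hx)
    have := mul_nonneg ht (f0_nonneg u)
    linarith

lemma suppFn_Kt_e1 : suppFn Kt (EuclideanSpace.single (0 : Fin 2) (1 : ℝ)) = 3/4 := by
  rw [suppFn_Kt, inner2, inner2, inner2]
  simp only [A, B, Cv, pt_apply_zero, pt_apply_one, EuclideanSpace.single_apply]
  norm_num

/-- For `-1 ≤ t ≤ 0` the support function in direction `e₁` is `3/4 + t`. -/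
lemma suppFn_wulff_neg {t : ℝ} (ht : -1 ≤ t) (ht0 : t ≤ 0) :
    suppFn (wulff (fun v => suppFn Kt v + t * f0 v))
      (EuclideanSpace.single (0 : Fin 2) (1 : ℝ)) = 3/4 + t := by
  apply IsGreatest.csSup_eq
  constructor
  · refine ⟨pt (3/4 + t) (-(1/4)), ?_, ?_⟩
    · intro u hu
      show (inner ℝ (pt (3/4 + t) (-(1/4))) u : ℝ) ≤ suppFn Kt u + t * f0 u
      rw [suppFn_Kt, inner2, inner2, inner2, inner2]
      simp only [A, B, Cv, pt_apply_zero, pt_apply_one, f0]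
      set M : ℝ := max (-(1/4) * u 0 + -(1/4) * u 1)
        (max (3/4 * u 0 + -(1/4) * u 1) (-(1/4) * u 0 + 3/4 * u 1)) with hM
      have hBle : 3/4 * u 0 + -(1/4) * u 1 ≤ M :=
        le_trans (le_max_left _ _) (le_max_right _ _)
      have hAle : -(1/4) * u 0 + -(1/4) * u 1 ≤ M := le_max_left _ _
      have hu0 : |u 0| ≤ 1 := by
        have h := abs_coord_le u 0; rwa [hu] at h
      have hu0' := abs_le.mp hu0
      rcases le_or_gt (4 * u 0 - 3) 0 with hc | hc
      · rw [max_eq_left hc, mul_zero, add_zero]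
        rcases le_or_gt 0 (u 0) with h0 | h0
        · nlinarith
        · nlinarith
      · rw [max_eq_right (le_of_lt hc)]
        nlinarith [hu0'.2]
    · show (inner ℝ (pt (3/4 + t) (-(1/4))) (EuclideanSpace.single (0 : Fin 2) (1 : ℝ)) : ℝ)
          = 3/4 + t
      rw [inner2]
      simp [EuclideanSpace.single_apply]
  · rintro y ⟨x, hx, rfl⟩
    simp only [wulff, Set.mem_setOf_eq] at hx
    have h := hx (EuclideanSpace.single (0 : Fin 2) (1 : ℝ))
      (by rw [EuclideanSpace.norm_single]; norm_num)
    rw [suppFn_Kt_e1] at h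
    have hf : f0 (EuclideanSpace.single (0 : Fin 2) (1 : ℝ)) = 1 := by
      simp only [f0, EuclideanSpace.single_apply]
      norm_num
    rw [hf, mul_one] at h
    exact h

lemma zero_mem_interior_Kt : (0 : Euc 2) ∈ interior Kt := by
  rw [mem_interior]
  refine ⟨ball 0 (1/8), ?_, isOpen_ball, mem_ball_self (by norm_num)⟩
  intro y hy
  have hn : ‖y‖ < 1/8 := by simpa [dist_zero_right] using hy
  have h0 := abs_le.mp (le_of_lt (lt_of_le_of_lt (abs_coord_le y 0) hn))
  have h1 := abs_le.mp (le_of_lt (lt_of_le_of_lt (abs_coord_le y 1) hn))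
  rw [mem_Kt_iff]
  exact ⟨by linarith [h0.1], by linarith [h1.1], by linarith [h0.2, h1.2]⟩

end WulffAux

/-- There is a triangle `K ⊆ ℝ²` (a translate of `conv{0,e₁,e₂}` with `0 ∈ int K`),
a continuous `f : S¹ → [0,1]` and `u ∈ S¹` such that the one-sided derivatives of
`t ↦ h_{K_t(f)}(u)` at `t = 0` differ; in particular the derivative does not exist. -/
theorem suppFn_wulff_perturbation_not_deriv_everywhere :
    ∃ K : Set (Euc 2), IsConvexBody K ∧ (0 : Euc 2) ∈ interior K ∧
      (∃ v : Euc 2, K = (fun x => x + v) ''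
        convexHull ℝ ({0, EuclideanSpace.single (0 : Fin 2) (1 : ℝ),
          EuclideanSpace.single (1 : Fin 2) (1 : ℝ)} : Set (Euc 2))) ∧
      ∃ f : Euc 2 → ℝ, Continuous f ∧ (∀ u : Euc 2, ‖u‖ = 1 → f u ∈ Set.Icc (0 : ℝ) 1) ∧
        ∃ u : Euc 2, ‖u‖ = 1 ∧
          ∃ dp dm : ℝ, dp ≠ dm ∧
            HasDerivWithinAt (fun t => suppFn (wulff (fun v => suppFn K v + t * f v)) u)
              dp (Set.Ici 0) 0 ∧
            HasDerivWithinAt (fun t => suppFn (wulff (fun v => suppFn K v + t * f v)) u)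
              dm (Set.Iic 0) 0 ∧
            ¬ ∃ d : ℝ, HasDerivAt (fun t => suppFn (wulff (fun v => suppFn K v + t * f v)) u)
              d 0 := by
  classical
  open WulffAux in
  refine ⟨Kt, ⟨?_, ?_, ?_⟩, zero_mem_interior_Kt, ⟨A, rfl⟩, f0, f0_cont,
    fun u hu => ⟨f0_nonneg u, f0_le_one hu⟩,
    EuclideanSpace.single (0 : Fin 2) (1 : ℝ),
    by rw [EuclideanSpace.norm_single]; norm_num,
    0, 1, by norm_num, ?_, ?_, ?_⟩
  · rw [Kt_eq]; exact convex_convexHull ℝ _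
  · rw [Kt_eq]
    exact (Set.toFinite ({A, B, Cv} : Set (Euc 2))).isCompact_convexHull (𝕜 := ℝ)
  · exact ⟨0, zero_mem_interior_Kt⟩
  · -- right derivative is 0
    have hconst : ∀ s ∈ Set.Ici (0:ℝ),
        (fun t => suppFn (wulff (fun v => suppFn Kt v + t * f0 v))
          (EuclideanSpace.single (0 : Fin 2) (1 : ℝ))) s = 3/4 := by
      intro s hs
      show suppFn (wulff (fun v => suppFn Kt v + s * f0 v))
        (EuclideanSpace.single (0 : Fin 2) (1 : ℝ)) = 3/4
      rw [wulff_eq_of_nonneg hs, suppFn_Kt_e1]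
    exact (hasDerivWithinAt_const (0:ℝ) (Set.Ici 0) (3/4 : ℝ)).congr hconst
      (hconst 0 Set.self_mem_Ici)
  · -- left derivative is 1
    have base : HasDerivWithinAt (fun t : ℝ => 3/4 + t) 1 (Set.Iic 0) 0 := by
      simpa using (hasDerivWithinAt_id (0:ℝ) (Set.Iic 0)).const_add (3/4 : ℝ)
    apply base.congr_of_eventuallyEq
    · have h1 : ∀ᶠ s in nhdsWithin (0:ℝ) (Set.Iic 0), s ∈ Set.Iic (0:ℝ) :=
        eventually_mem_nhdsWithin
      have h2 : ∀ᶠ s in nhdsWithin (0:ℝ) (Set.Iic 0), (-1:ℝ) < s :=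
        (eventually_gt_nhds (by norm_num : (-1:ℝ) < 0)).filter_mono nhdsWithin_le_nhds
      filter_upwards [h1, h2] with s hs1 hs2
      show suppFn (wulff (fun v => suppFn Kt v + s * f0 v))
        (EuclideanSpace.single (0 : Fin 2) (1 : ℝ)) = 3/4 + s
      exact suppFn_wulff_neg (le_of_lt hs2) hs1
    · show suppFn (wulff (fun v => suppFn Kt v + (0:ℝ) * f0 v))
        (EuclideanSpace.single (0 : Fin 2) (1 : ℝ)) = 3/4 + 0
      rw [suppFn_wulff_neg (by norm_num) le_rfl]
  · -- no two-sided derivative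
    rintro ⟨d, hd⟩
    have hp : HasDerivWithinAt (fun t => suppFn (wulff (fun v => suppFn Kt v + t * f0 v))
        (EuclideanSpace.single (0 : Fin 2) (1 : ℝ))) 0 (Set.Ici 0) 0 := by
      have hconst : ∀ s ∈ Set.Ici (0:ℝ),
          (fun t => suppFn (wulff (fun v => suppFn Kt v + t * f0 v))
            (EuclideanSpace.single (0 : Fin 2) (1 : ℝ))) s = 3/4 := by
        intro s hs
        show suppFn (wulff (fun v => suppFn Kt v + s * f0 v))
          (EuclideanSpace.single (0 : Fin 2) (1 : ℝ)) = 3/4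
        rw [wulff_eq_of_nonneg hs, suppFn_Kt_e1]
      exact (hasDerivWithinAt_const (0:ℝ) (Set.Ici 0) (3/4 : ℝ)).congr hconst
        (hconst 0 Set.self_mem_Ici)
    have hm : HasDerivWithinAt (fun t => suppFn (wulff (fun v => suppFn Kt v + t * f0 v))
        (EuclideanSpace.single (0 : Fin 2) (1 : ℝ))) 1 (Set.Iic 0) 0 := by
      have base : HasDerivWithinAt (fun t : ℝ => 3/4 + t) 1 (Set.Iic 0) 0 := by
        simpa using (hasDerivWithinAt_id (0:ℝ) (Set.Iic 0)).const_add (3/4 : ℝ)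
      apply base.congr_of_eventuallyEq
      · have h1 : ∀ᶠ s in nhdsWithin (0:ℝ) (Set.Iic 0), s ∈ Set.Iic (0:ℝ) :=
          eventually_mem_nhdsWithin
        have h2 : ∀ᶠ s in nhdsWithin (0:ℝ) (Set.Iic 0), (-1:ℝ) < s :=
          (eventually_gt_nhds (by norm_num : (-1:ℝ) < 0)).filter_mono nhdsWithin_le_nhds
        filter_upwards [h1, h2] with s hs1 hs2
        show suppFn (wulff (fun v => suppFn Kt v + s * f0 v))
          (EuclideanSpace.single (0 : Fin 2) (1 : ℝ)) = 3/4 + s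
        exact suppFn_wulff_neg (le_of_lt hs2) hs1
      · show suppFn (wulff (fun v => suppFn Kt v + (0:ℝ) * f0 v))
          (EuclideanSpace.single (0 : Fin 2) (1 : ℝ)) = 3/4 + 0
        rw [suppFn_wulff_neg (by norm_num) le_rfl]
    have e0 : d = 0 :=
      (uniqueDiffOn_Ici (0:ℝ) 0 Set.self_mem_Ici).eq_deriv _ hd.hasDerivWithinAt hp
    have e1 : d = 1 :=
      (uniqueDiffOn_Iic (0:ℝ) 0 Set.self_mem_Iic).eq_deriv _ hd.hasDerivWithinAt hm
    rw [e0] at e1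
    norm_num at e1


end
end
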